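/- arXiv:0804.1001 — 8 statements merged into one kernel-verified Lean document; each statement's English description precedes it below -/
import Mathlib

section
/- The function f(x,y) = (x+y-2)/(xy-1) is monotone decreasing in each coordinate: if x₁ ≥ x₂ ≥ 1, y₁ ≥ y₂ ≥ 1, x₂ + y₂ > 2, then f(x₁,y₁) ≤ f(x₂,y₂). -/
/-- `f(x,y) = (x+y-2)/(xy-1)` is monotone decreasing in each coordinate:
if `x₁ ≥ x₂ ≥ 1`, `y₁ ≥ y₂ ≥ 1`, `x₂ + y₂ > 2`, then `f(x₁,y₁) ≤ f(x₂,y₂)`. -/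
theorem quotient_correlation_f_antitone (x₁ x₂ y₁ y₂ : ℝ)
    (hx2 : 1 ≤ x₂) (hy2 : 1 ≤ y₂) (hx : x₂ ≤ x₁) (hy : y₂ ≤ y₁)
    (hxy : 2 < x₂ + y₂) :
    (x₁ + y₁ - 2) / (x₁ * y₁ - 1) ≤ (x₂ + y₂ - 2) / (x₂ * y₂ - 1) := by
  have h2 : (0:ℝ) < x₂ * y₂ - 1 := by nlinarith [mul_nonneg (sub_nonneg.2 hx2) (sub_nonneg.2 hy2)]
  have h1 : (0:ℝ) < x₁ * y₁ - 1 := by nlinarith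
  rw [div_le_div_iff₀ h1 h2]
  nlinarith [mul_nonneg (sub_nonneg.2 (hx2.trans hx)) (sub_nonneg.2 (hy2.trans hy)),
    mul_nonneg (sub_nonneg.2 hx) (sub_nonneg.2 hy),
    mul_nonneg (sub_nonneg.2 hx) (sub_nonneg.2 hy2),
    mul_nonneg (sub_nonneg.2 hy) (sub_nonneg.2 hx2),
    mul_nonneg (mul_nonneg (sub_nonneg.2 hx) (sub_nonneg.2 hy2)) (sub_nonneg.2 hy2),
    mul_nonneg (mul_nonneg (sub_nonneg.2 hy) (sub_nonneg.2 hx2)) (sub_nonneg.2 hx2),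
    mul_nonneg (mul_nonneg (sub_nonneg.2 hx) (sub_nonneg.2 hy)) (sub_nonneg.2 hx2),
    mul_nonneg (mul_nonneg (sub_nonneg.2 hx) (sub_nonneg.2 hy)) (sub_nonneg.2 hy2)]
end

section
/- Let (Xᵢ, Yᵢ), i = 1,…,n, be an i.i.d. sample from independent unit Fréchet X and Y. Then lim_{n→∞} P( n^{-1}(max_{i≤n} Yᵢ/Xᵢ + 1) ≤ x ) = exp(-1/x) for every x > 0. -/
open MeasureTheory ProbabilityTheory Real Filter Set Topology

/-!
For independent unit Fréchet `X` and `Y`, conditioning on `X` gives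
`P(Y / X ≤ s) = ∫ exp (-1/(s u)) exp (-1/u) / u² du`, and the integrand is the Fréchet density of
scale `1 + 1/s` divided by `1 + 1/s`, so `P(Y / X ≤ s) = s / (s + 1)`. The event
`n⁻¹ (maxᵢ Yᵢ/Xᵢ + 1) ≤ x` says that all `n` independent quotients are at most `n x - 1`, so its
probability is `(1 - 1/(n x))ⁿ → exp (-1/x)`.
-/

noncomputable section

/-- The Fréchet distribution function of shape `1` and scale `c > 0`: `exp (-c/u)` for `u > 0` and
`0` for `u ≤ 0`. -/
def frechetCDF (c u : ℝ) : ℝ := expNegInvGlue (u / c)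

def frechetPDF (c u : ℝ) : ℝ := c / u ^ 2 * frechetCDF c u

def frechetMeasure (c : ℝ) : Measure ℝ :=
  volume.withDensity fun u => ENNReal.ofReal (frechetPDF c u)

end

lemma measurableSet_snd_div_fst_le (s : ℝ) : MeasurableSet {p : ℝ × ℝ | p.2 / p.1 ≤ s} :=
  measurableSet_le (measurable_snd.div measurable_fst) measurable_const

section FrechetDistribution

variable {c : ℝ}

lemma frechetCDF_of_nonpos (hc : 0 < c) {u : ℝ} (hu : u ≤ 0) : frechetCDF c u = 0 :=
  expNegInvGlue.zero_of_nonpos (div_nonpos_of_nonpos_of_nonneg hu hc.le)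

lemma frechetCDF_of_pos (hc : 0 < c) {u : ℝ} (hu : 0 < u) : frechetCDF c u = exp (-c / u) := by
  rw [frechetCDF, expNegInvGlue, if_neg (div_pos hu hc).not_ge, inv_div, neg_div]

lemma frechetCDF_nonneg (c u : ℝ) : 0 ≤ frechetCDF c u :=
  expNegInvGlue.nonneg _

lemma frechetCDF_le_one (c u : ℝ) : frechetCDF c u ≤ 1 := by
  unfold frechetCDF expNegInvGlue
  split_ifs with h
  · exact zero_le_one
  · exact exp_le_one_iff.2 (neg_nonpos.2 (inv_nonneg.2 (le_of_not_ge h)))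

lemma frechetCDF_mul (c s u : ℝ) : frechetCDF c (s * u) = frechetCDF (c / s) u := by
  rw [frechetCDF, frechetCDF, div_div_eq_mul_div, mul_comm]

lemma continuous_frechetCDF (c : ℝ) : Continuous (frechetCDF c) :=
  (expNegInvGlue.contDiff (n := 0)).continuous.comp (continuous_id.div_const c)

lemma tendsto_frechetCDF_atTop (hc : 0 < c) : Tendsto (frechetCDF c) atTop (𝓝 1) := by
  have hexp : Tendsto (fun u => exp (-c / u)) atTop (𝓝 1) := by
    simpa using (tendsto_const_nhds (x := -c)).div_atTop tendsto_id |>.rexp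
  exact hexp.congr' ((eventually_gt_atTop 0).mono fun u hu => (frechetCDF_of_pos hc hu).symm)

lemma frechetPDF_nonneg (hc : 0 ≤ c) (u : ℝ) : 0 ≤ frechetPDF c u :=
  mul_nonneg (div_nonneg hc (sq_nonneg u)) (frechetCDF_nonneg c u)

lemma frechetPDF_of_nonpos (hc : 0 < c) {u : ℝ} (hu : u ≤ 0) : frechetPDF c u = 0 := by
  rw [frechetPDF, frechetCDF_of_nonpos hc hu, mul_zero]

lemma measurable_frechetPDF (c : ℝ) : Measurable (frechetPDF c) :=
  (measurable_const.div (measurable_id.pow_const 2)).mul (continuous_frechetCDF c).measurable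

lemma hasDerivAt_frechetCDF (hc : 0 < c) {u : ℝ} (hu : 0 < u) :
    HasDerivAt (frechetCDF c) (frechetPDF c u) u := by
  have hexp : HasDerivAt (fun v => exp (-c * v⁻¹)) (exp (-c * u⁻¹) * (-c * -(u ^ 2)⁻¹)) u :=
    ((hasDerivAt_inv hu.ne').const_mul (-c)).exp
  have heq : frechetCDF c =ᶠ[𝓝 u] fun v => exp (-c * v⁻¹) :=
    (eventually_gt_nhds hu).mono fun v hv => by rw [frechetCDF_of_pos hc hv, div_eq_mul_inv]
  refine (hexp.congr_of_eventuallyEq heq).congr_deriv ?_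
  rw [frechetPDF, frechetCDF_of_pos hc hu, div_eq_mul_inv (-c)]
  ring

lemma frechetPDF_mul_frechetCDF {a b : ℝ} (ha : 0 < a) (hb : 0 < b) (u : ℝ) :
    frechetPDF a u * frechetCDF b u = a / (a + b) * frechetPDF (a + b) u := by
  rcases le_or_gt u 0 with hu | hu
  · rw [frechetPDF_of_nonpos ha hu, frechetPDF_of_nonpos (add_pos ha hb) hu, zero_mul, mul_zero]
  · rw [frechetPDF, frechetPDF, frechetCDF_of_pos ha hu, frechetCDF_of_pos hb hu,
      frechetCDF_of_pos (add_pos ha hb) hu, show -(a + b) / u = -a / u + -b / u by ring, exp_add]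
    field_simp

lemma lintegral_Ioi_frechetPDF (hc : 0 < c) {a : ℝ} (ha : 0 ≤ a) :
    ∫⁻ u in Ioi a, ENNReal.ofReal (frechetPDF c u) = ENNReal.ofReal (1 - frechetCDF c a) := by
  have hcont := (continuous_frechetCDF c).continuousWithinAt (s := Ici a) (x := a)
  have hderiv : ∀ u ∈ Ioi a, HasDerivAt (frechetCDF c) (frechetPDF c u) u :=
    fun u hu => hasDerivAt_frechetCDF hc (ha.trans_lt hu)
  have hnonneg : ∀ u ∈ Ioi a, 0 ≤ frechetPDF c u := fun u _ => frechetPDF_nonneg hc.le u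
  rw [← ofReal_integral_eq_lintegral_ofReal
      (integrableOn_Ioi_deriv_of_nonneg hcont hderiv hnonneg (tendsto_frechetCDF_atTop hc))
      (ae_of_all _ (frechetPDF_nonneg hc.le)),
    integral_Ioi_of_hasDerivAt_of_nonneg hcont hderiv hnonneg (tendsto_frechetCDF_atTop hc)]

lemma lintegral_frechetPDF (hc : 0 < c) : ∫⁻ u, ENNReal.ofReal (frechetPDF c u) = 1 := by
  have hsupp : (fun u => ENNReal.ofReal (frechetPDF c u)).support ⊆ Ioi 0 := fun u hu =>
    lt_of_not_ge fun (h : u ≤ 0) =>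
      hu (by simp only [frechetPDF_of_nonpos hc h, ENNReal.ofReal_zero])
  rw [← setLIntegral_eq_of_support_subset hsupp, lintegral_Ioi_frechetPDF hc le_rfl,
    frechetCDF_of_nonpos hc le_rfl, sub_zero, ENNReal.ofReal_one]

lemma isProbabilityMeasure_frechetMeasure (hc : 0 < c) :
    IsProbabilityMeasure (frechetMeasure c) :=
  ⟨by rw [frechetMeasure, withDensity_apply _ MeasurableSet.univ, Measure.restrict_univ,
    lintegral_frechetPDF hc]⟩

lemma frechetMeasure_Iic (hc : 0 < c) (x : ℝ) :
    frechetMeasure c (Iic x) = ENNReal.ofReal (frechetCDF c x) := by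
  have := isProbabilityMeasure_frechetMeasure hc
  rcases le_total x 0 with hx | hx
  · rw [frechetCDF_of_nonpos hc hx, ENNReal.ofReal_zero, frechetMeasure,
      withDensity_apply _ measurableSet_Iic, setLIntegral_congr_fun measurableSet_Iic
        fun u hu => by rw [frechetPDF_of_nonpos hc (le_trans hu hx), ENNReal.ofReal_zero]]
    exact lintegral_zero
  · rw [← compl_Ioi, measure_compl measurableSet_Ioi (measure_ne_top _ _), measure_univ,
      frechetMeasure, withDensity_apply _ measurableSet_Ioi, lintegral_Ioi_frechetPDF hc hx,
      ENNReal.ofReal_sub _ (frechetCDF_nonneg c x), ENNReal.ofReal_one,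
      ENNReal.sub_sub_cancel ENNReal.one_ne_top (ENNReal.ofReal_le_one.2 (frechetCDF_le_one c x))]

lemma ae_pos_frechetMeasure (hc : 0 < c) : ∀ᵐ u ∂frechetMeasure c, 0 < u := by
  simp_rw [ae_iff, not_lt]
  exact (frechetMeasure_Iic hc 0).trans
    (by rw [frechetCDF_of_nonpos hc le_rfl, ENNReal.ofReal_zero])

lemma map_eq_frechetMeasure {Ω : Type*} [MeasurableSpace Ω] {μ : Measure Ω}
    [IsProbabilityMeasure μ] (hc : 0 < c) {Z : Ω → ℝ} (hZ : Measurable Z)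
    (hpos : ∀ᵐ ω ∂μ, 0 < Z ω)
    (hcdf : ∀ x : ℝ, 0 < x → μ {ω | Z ω ≤ x} = ENNReal.ofReal (exp (-c / x))) :
    μ.map Z = frechetMeasure c := by
  have := isProbabilityMeasure_frechetMeasure hc
  have := Measure.isProbabilityMeasure_map (μ := μ) hZ.aemeasurable
  refine Measure.ext_of_Iic _ _ fun x => ?_
  rw [Measure.map_apply hZ measurableSet_Iic, frechetMeasure_Iic hc]
  rcases le_or_gt x 0 with hx | hx
  · rw [frechetCDF_of_nonpos hc hx, ENNReal.ofReal_zero]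
    exact measure_mono_null (fun ω (hω : Z ω ≤ x) => (hω.trans hx).not_gt) (ae_iff.1 hpos)
  · rw [frechetCDF_of_pos hc hx]
    exact hcdf x hx

lemma frechetMeasure_prod_div_le {a b s : ℝ} (ha : 0 < a) (hb : 0 < b) (hs : 0 < s) :
    (frechetMeasure a).prod (frechetMeasure b) {p | p.2 / p.1 ≤ s} =
      ENNReal.ofReal (a * s / (a * s + b)) := by
  have hslice : ∀ᵐ u ∂frechetMeasure a, frechetMeasure b (Prod.mk u ⁻¹' {p | p.2 / p.1 ≤ s}) =
      ENNReal.ofReal (frechetCDF (b / s) u) := by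
    filter_upwards [ae_pos_frechetMeasure ha] with u hu
    have hpre : Prod.mk u ⁻¹' {p : ℝ × ℝ | p.2 / p.1 ≤ s} = Iic (s * u) :=
      ext fun v => div_le_iff₀ hu
    rw [hpre, frechetMeasure_Iic hb, frechetCDF_mul]
  have := isProbabilityMeasure_frechetMeasure hb
  have hbs : 0 < b / s := div_pos hb hs
  have hconst : a / (a + b / s) = a * s / (a * s + b) := by field_simp
  rw [Measure.prod_apply (measurableSet_snd_div_fst_le s), lintegral_congr_ae hslice,
    frechetMeasure,
    lintegral_withDensity_eq_lintegral_mul _ (measurable_frechetPDF a).ennreal_ofReal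
      (continuous_frechetCDF _).measurable.ennreal_ofReal]
  simp_rw [Pi.mul_apply, ← ENNReal.ofReal_mul (frechetPDF_nonneg ha.le _),
    frechetPDF_mul_frechetCDF ha hbs, ENNReal.ofReal_mul (div_pos ha (add_pos ha hbs)).le]
  rw [lintegral_const_mul _ (measurable_frechetPDF _).ennreal_ofReal,
    lintegral_frechetPDF (add_pos ha hbs), mul_one, hconst]

lemma measure_div_le_of_indepFun {Ω : Type*} [MeasurableSpace Ω] {μ : Measure Ω}
    [IsProbabilityMeasure μ] {a b s : ℝ} (ha : 0 < a) (hb : 0 < b) (hs : 0 < s) {X Y : Ω → ℝ}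
    (hX : Measurable X) (hY : Measurable Y) (hXY : IndepFun X Y μ)
    (hXlaw : μ.map X = frechetMeasure a) (hYlaw : μ.map Y = frechetMeasure b) :
    μ ((fun ω => (X ω, Y ω)) ⁻¹' {p | p.2 / p.1 ≤ s}) = ENNReal.ofReal (a * s / (a * s + b)) := by
  rw [← Measure.map_apply (hX.prodMk hY) (measurableSet_snd_div_fst_le s),
    (indepFun_iff_map_prod_eq_prod_map_map hX.aemeasurable hY.aemeasurable).1 hXY,
    hXlaw, hYlaw, frechetMeasure_prod_div_le ha hb hs]

end FrechetDistribution

lemma inv_mul_iSup_add_one_le_iff {n : ℕ} (hn : n ≠ 0) (f : ℕ → ℝ) (x : ℝ) :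
    (n : ℝ)⁻¹ * ((⨆ i : Fin n, f i) + 1) ≤ x ↔ ∀ i ∈ Finset.range n, f i ≤ n * x - 1 := by
  have : Nonempty (Fin n) := ⟨⟨0, Nat.pos_of_ne_zero hn⟩⟩
  rw [inv_mul_le_iff₀ (by positivity), ← le_sub_iff_add_le,
    ciSup_le_iff (finite_range _).bddAbove, Fin.forall_iff]
  simp only [Finset.mem_range]

lemma tendsto_sub_one_div_pow (x : ℝ) (hx : x ≠ 0) :
    Tendsto (fun n : ℕ => ((n * x - 1) / (n * x)) ^ n) atTop (𝓝 (exp (-1 / x))) := by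
  refine (tendsto_one_add_div_pow_exp (-1 / x)).congr' ?_
  filter_upwards [eventually_ne_atTop 0] with n hn
  congr 1
  field_simp
  ring

theorem frechet_max_quotient_limit_general {Ω : Type*} [MeasurableSpace Ω] (μ : Measure Ω)
    [IsProbabilityMeasure μ] (X Y : ℕ → Ω → ℝ)
    (hX : ∀ i, Measurable (X i)) (hY : ∀ i, Measurable (Y i))
    (hiid : iIndepFun (fun i ω => (X i ω, Y i ω)) μ)
    (hindep : ∀ i, IndepFun (X i) (Y i) μ)
    (hXpos : ∀ i, ∀ᵐ ω ∂μ, 0 < X i ω) (hYpos : ∀ i, ∀ᵐ ω ∂μ, 0 < Y i ω)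
    (hXF : ∀ i, ∀ x : ℝ, 0 < x → μ {ω | X i ω ≤ x} = ENNReal.ofReal (exp (-1 / x)))
    (hYF : ∀ i, ∀ x : ℝ, 0 < x → μ {ω | Y i ω ≤ x} = ENNReal.ofReal (exp (-1 / x))) :
    ∀ x : ℝ, 0 < x →
      Tendsto (fun n : ℕ =>
          (μ {ω | (n : ℝ)⁻¹ * ((⨆ i : Fin n, Y i ω / X i ω) + 1) ≤ x}).toReal)
        atTop (nhds (exp (-1 / x))) := by
  intro x hx
  have hquot : ∀ i, ∀ s : ℝ, 0 < s →
      μ ((fun ω => (X i ω, Y i ω)) ⁻¹' {p | p.2 / p.1 ≤ s}) = ENNReal.ofReal (s / (s + 1)) :=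
    fun i s hs => by
      rw [measure_div_le_of_indepFun one_pos one_pos hs (hX i) (hY i) (hindep i)
        (map_eq_frechetMeasure one_pos (hX i) (hXpos i) (hXF i))
        (map_eq_frechetMeasure one_pos (hY i) (hYpos i) (hYF i)), one_mul]
  refine (tendsto_sub_one_div_pow x hx.ne').congr' ?_
  filter_upwards [(tendsto_natCast_atTop_atTop.atTop_mul_const hx).eventually_gt_atTop 1]
    with n hn
  have hn0 : n ≠ 0 := by rintro rfl; norm_num at hn
  have hevent : {ω | (n : ℝ)⁻¹ * ((⨆ i : Fin n, Y i ω / X i ω) + 1) ≤ x} =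
      ⋂ i ∈ Finset.range n, (fun ω => (X i ω, Y i ω)) ⁻¹' {p | p.2 / p.1 ≤ n * x - 1} := by
    ext ω
    simpa only [mem_ofPred_eq, mem_iInter₂, mem_preimage]
      using inv_mul_iSup_add_one_le_iff hn0 (fun i => Y i ω / X i ω) x
  rw [hevent, hiid.measure_inter_preimage_eq_mul _ fun i _ => measurableSet_snd_div_fst_le _,
    Finset.prod_congr rfl fun i _ => hquot i _ (sub_pos.2 hn), Finset.prod_const,
    Finset.card_range, sub_add_cancel, ENNReal.toReal_pow,
    ENNReal.toReal_ofReal (div_nonneg (by linarith) (by linarith))]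

/-- For an i.i.d. sample `(Xᵢ, Yᵢ)` from independent unit Fréchet `X` and `Y`,
`lim_{n→∞} P(n⁻¹(max_{i≤n} Yᵢ/Xᵢ + 1) ≤ x) = exp(-1/x)` for every `x > 0`. -/
theorem frechet_max_quotient_limit {Ω : Type*} [MeasurableSpace Ω] (μ : Measure Ω)
    [IsProbabilityMeasure μ] (X Y : ℕ → Ω → ℝ)
    (hX : ∀ i, Measurable (X i)) (hY : ∀ i, Measurable (Y i))
    (hiid : iIndepFun (fun i ω => (X i ω, Y i ω)) μ)
    (hident : ∀ i, Measure.map (fun ω => (X i ω, Y i ω)) μ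
      = Measure.map (fun ω => (X 0 ω, Y 0 ω)) μ)
    (hindep : ∀ i, IndepFun (X i) (Y i) μ)
    (hXpos : ∀ i, ∀ᵐ ω ∂μ, 0 < X i ω) (hYpos : ∀ i, ∀ᵐ ω ∂μ, 0 < Y i ω)
    (hXF : ∀ i, ∀ x : ℝ, 0 < x → μ {ω | X i ω ≤ x} = ENNReal.ofReal (exp (-1 / x)))
    (hYF : ∀ i, ∀ x : ℝ, 0 < x → μ {ω | Y i ω ≤ x} = ENNReal.ofReal (exp (-1 / x))) :
    ∀ x : ℝ, 0 < x →
      Tendsto (fun n : ℕ =>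
          (μ {ω | (n : ℝ)⁻¹ * ((⨆ i : Fin n, Y i ω / X i ω) + 1) ≤ x}).toReal)
        atTop (nhds (exp (-1 / x))) :=
  frechet_max_quotient_limit_general μ X Y hX hY hiid hindep hXpos hYpos hXF hYF
end

section
/- For independent unit Fréchet X and Y, P( X/(ny-1) < Y < (nx-1)X ) = 1 - 1/(nx) - 1/(ny) whenever nx > 1 and ny > 1. -/
open MeasureTheory ProbabilityTheory Real Set

/-!
If `X` is unit Fréchet then `exp (-1 / X)` is uniform on `[0, 1]`, and `Y ≤ c X` becomes
`V ≤ U ^ c⁻¹` for the independent uniforms `U = exp (-1 / X)`, `V = exp (-1 / Y)`; hence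
`P(Y ≤ c X) = ∫₀¹ u ^ c⁻¹ du = 1 / (c⁻¹ + 1)`. The strip is `{Y < a X} \ {Y ≤ b⁻¹ X}` with
`a = n x - 1`, `b = n y - 1`, and since `X > 0` one of these events a.s. contains the other,
so its probability is the truncated difference `(1 - 1 / (n x)) - 1 / (n y)`.
-/

theorem measure_sdiff_eq_tsub_of_ae_le_or_ae_le {α : Type*} [MeasurableSpace α] {μ : Measure α}
    {s t : Set α} (ht : NullMeasurableSet t μ) (hμt : μ t ≠ ⊤)
    (h : t ≤ᵐ[μ] s ∨ s ≤ᵐ[μ] t) : μ (s \ t) = μ s - μ t := by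
  rcases h with hts | hst
  · rw [measure_sdiff' s ht hμt, measure_congr (union_comm s t ▸ union_ae_eq_right.2
      (ae_le_set.1 hts))]
  · rw [ae_le_set.1 hst, tsub_eq_zero_of_le (measure_mono_ae hst)]

theorem volume_restrict_Icc_zero_one_Iic (t : ℝ) :
    volume.restrict (Icc (0 : ℝ) 1) (Iic t) = ENNReal.ofReal (min t 1) := by
  have hset : Iic t ∩ Icc 0 1 = Icc 0 (min t 1) := by
    ext s
    simp only [mem_inter_iff, mem_Iic, mem_Icc, le_min_iff]
    tauto
  rw [Measure.restrict_apply measurableSet_Iic, hset, Real.volume_Icc, sub_zero]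

section

variable {Ω : Type*} [MeasurableSpace Ω] {μ : Measure Ω}

theorem measure_le_rpow_of_indepFun_uniform {U V : Ω → ℝ} (hU : Measurable U)
    (hV : Measurable V) (hUV : IndepFun U V μ)
    (hUlaw : μ.map U = volume.restrict (Icc 0 1)) (hVlaw : μ.map V = volume.restrict (Icc 0 1))
    {r : ℝ} (hr : 0 ≤ r) :
    μ {ω | V ω ≤ U ω ^ r} = ENNReal.ofReal (1 / (r + 1)) := by
  have hS : MeasurableSet {p : ℝ × ℝ | p.2 ≤ p.1 ^ r} :=
    measurableSet_le measurable_snd (measurable_fst.pow_const r)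
  have hlaw := (indepFun_iff_map_prod_eq_prod_map_map' hU.aemeasurable hV.aemeasurable
    (hUlaw ▸ inferInstance) (hVlaw ▸ inferInstance)).1 hUV
  calc μ {ω | V ω ≤ U ω ^ r}
      = μ.map (fun ω => (U ω, V ω)) {p | p.2 ≤ p.1 ^ r} :=
        (Measure.map_apply (hU.prodMk hV) hS).symm
    _ = ∫⁻ u in Icc 0 1, volume.restrict (Icc (0 : ℝ) 1) (Iic (u ^ r)) := by
        rw [hlaw, hUlaw, hVlaw, Measure.prod_apply hS]
        rfl
    _ = ∫⁻ u in Icc 0 1, ENNReal.ofReal (u ^ r) := by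
        refine setLIntegral_congr_fun measurableSet_Icc fun u hu => ?_
        rw [volume_restrict_Icc_zero_one_Iic, min_eq_left (rpow_le_one hu.1 hu.2 hr)]
    _ = ENNReal.ofReal (∫ u in Icc 0 1, u ^ r) :=
        (ofReal_integral_eq_lintegral_ofReal (continuous_rpow_const hr).integrableOn_Icc
          ((ae_restrict_mem measurableSet_Icc).mono fun u hu => rpow_nonneg hu.1 r)).symm
    _ = ENNReal.ofReal (1 / (r + 1)) := by
        rw [integral_Icc_eq_integral_Ioc, ← intervalIntegral.integral_of_le zero_le_one,
          integral_rpow (Or.inl (by linarith)), one_rpow, zero_rpow (by linarith), sub_zero]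

variable [IsProbabilityMeasure μ]

theorem map_exp_neg_inv_eq_uniform {Z : Ω → ℝ} (hZ : Measurable Z) (hpos : ∀ᵐ ω ∂μ, 0 < Z ω)
    (hF : ∀ t : ℝ, 0 < t → μ {ω | Z ω ≤ t} = ENNReal.ofReal (exp (-1 / t))) :
    μ.map (fun ω => exp (-1 / Z ω)) = volume.restrict (Icc 0 1) := by
  have hU : Measurable fun ω => exp (-1 / Z ω) := by fun_prop
  have := Measure.isProbabilityMeasure_map (μ := μ) hU.aemeasurable
  refine Measure.ext_of_Iic _ _ fun t => ?_
  rw [Measure.map_apply hU measurableSet_Iic, volume_restrict_Icc_zero_one_Iic]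
  rcases le_or_gt t 0 with ht0 | ht0
  · have hempty : (fun ω => exp (-1 / Z ω)) ⁻¹' Iic t = ∅ :=
      eq_empty_of_forall_notMem fun ω hω => (exp_pos _).not_ge (le_trans hω ht0)
    rw [hempty, measure_empty, ENNReal.ofReal_of_nonpos (min_le_of_left_le ht0)]
  rcases lt_or_ge t 1 with ht1 | ht1
  · have hlog : 0 < -log t := neg_pos.2 (log_neg ht0 ht1)
    have hset : (fun ω => exp (-1 / Z ω)) ⁻¹' Iic t =ᵐ[μ] {ω | Z ω ≤ (-log t)⁻¹} := by
      filter_upwards [hpos] with ω hω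
      refine propext ?_
      change exp (-1 / Z ω) ≤ t ↔ Z ω ≤ (-log t)⁻¹
      rw [← le_log_iff_exp_le ht0, neg_div, neg_le, ← one_div, le_one_div hlog hω]
    rw [measure_congr hset, hF _ (inv_pos.2 hlog), min_eq_left ht1.le, div_inv_eq_mul,
      neg_one_mul, neg_neg, exp_log ht0]
  · have hall : (fun ω => exp (-1 / Z ω)) ⁻¹' Iic t =ᵐ[μ] univ := by
      rw [Filter.eventuallyEq_univ]
      filter_upwards [hpos] with ω hω
      exact (exp_le_one_iff.2 (div_nonpos_of_nonpos_of_nonneg (by norm_num) hω.le)).trans ht1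
    rw [measure_congr hall, measure_univ, min_eq_right ht1, ENNReal.ofReal_one]

theorem measure_le_mul_of_frechet {X Y : Ω → ℝ} (hX : Measurable X) (hY : Measurable Y)
    (hXY : IndepFun X Y μ) (hXpos : ∀ᵐ ω ∂μ, 0 < X ω) (hYpos : ∀ᵐ ω ∂μ, 0 < Y ω)
    (hXF : ∀ x : ℝ, 0 < x → μ {ω | X ω ≤ x} = ENNReal.ofReal (exp (-1 / x)))
    (hYF : ∀ x : ℝ, 0 < x → μ {ω | Y ω ≤ x} = ENNReal.ofReal (exp (-1 / x)))
    {c : ℝ} (hc : 0 < c) :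
    μ {ω | Y ω ≤ c * X ω} = ENNReal.ofReal (1 / (c⁻¹ + 1)) := by
  have hset : {ω | Y ω ≤ c * X ω} =ᵐ[μ] {ω | exp (-1 / Y ω) ≤ exp (-1 / X ω) ^ c⁻¹} := by
    filter_upwards [hXpos, hYpos] with ω hXω hYω
    refine propext ?_
    change Y ω ≤ c * X ω ↔ exp (-1 / Y ω) ≤ exp (-1 / X ω) ^ c⁻¹
    rw [← exp_mul, exp_le_exp, show -1 / X ω * c⁻¹ = -(1 / (c * X ω)) by ring, neg_div,
      neg_le_neg_iff, one_div_le_one_div (by positivity) hYω]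
  have hφ : Measurable fun s : ℝ => exp (-1 / s) := by fun_prop
  rw [measure_congr hset]
  exact measure_le_rpow_of_indepFun_uniform (hφ.comp hX) (hφ.comp hY)
    (hXY.comp hφ hφ) (map_exp_neg_inv_eq_uniform hX hXpos hXF)
    (map_exp_neg_inv_eq_uniform hY hYpos hYF) (inv_nonneg.2 hc.le)

end

theorem ae_le_or_ae_le_of_pos {Ω : Type*} [MeasurableSpace Ω] {μ : Measure Ω} {X Y : Ω → ℝ}
    (hXpos : ∀ᵐ ω ∂μ, 0 < X ω) (a b : ℝ) :
    {ω | Y ω ≤ b * X ω} ≤ᵐ[μ] {ω | Y ω < a * X ω} ∨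
      {ω | Y ω < a * X ω} ≤ᵐ[μ] {ω | Y ω ≤ b * X ω} := by
  rcases lt_or_ge b a with hba | hab
  · left
    filter_upwards [hXpos] with ω hω hle
    exact hle.trans_lt (mul_lt_mul_of_pos_right hba hω)
  · right
    filter_upwards [hXpos] with ω hω hlt
    exact hlt.le.trans (mul_le_mul_of_nonneg_right hab hω.le)

theorem frechet_strip_probability_general {Ω : Type*} [MeasurableSpace Ω] (μ : Measure Ω)
    [IsProbabilityMeasure μ] (X Y : Ω → ℝ) (hX : Measurable X) (hY : Measurable Y)
    (hXY : IndepFun X Y μ)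
    (hXpos : ∀ᵐ ω ∂μ, 0 < X ω) (hYpos : ∀ᵐ ω ∂μ, 0 < Y ω)
    (hXF : ∀ x : ℝ, 0 < x → μ {ω | X ω ≤ x} = ENNReal.ofReal (exp (-1 / x)))
    (hYF : ∀ x : ℝ, 0 < x → μ {ω | Y ω ≤ x} = ENNReal.ofReal (exp (-1 / x)))
    (n : ℝ) (x y : ℝ)
    (hnx : 1 < n * x) (hny : 1 < n * y) :
    μ {ω | X ω / (n * y - 1) < Y ω ∧ Y ω < (n * x - 1) * X ω}
      = ENNReal.ofReal (1 - 1 / (n * x) - 1 / (n * y)) := by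
  have ha : 0 < n * x - 1 := by linarith
  have hb : 0 < n * y - 1 := by linarith
  have hstrip : {ω | X ω / (n * y - 1) < Y ω ∧ Y ω < (n * x - 1) * X ω}
      = {ω | Y ω < (n * x - 1) * X ω} \ {ω | Y ω ≤ (n * y - 1)⁻¹ * X ω} := by
    ext ω
    simp only [mem_ofPred_eq, mem_sdiff, not_le, div_eq_inv_mul]
    tauto
  have hlower : {ω | Y ω < (n * x - 1) * X ω} = {ω | X ω ≤ (n * x - 1)⁻¹ * Y ω}ᶜ := by
    ext ω
    simp only [mem_ofPred_eq, mem_compl_iff, not_le, inv_mul_lt_iff₀ ha]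
  rw [hstrip, measure_sdiff_eq_tsub_of_ae_le_or_ae_le
      (measurableSet_le hY (by fun_prop)).nullMeasurableSet (measure_ne_top _ _)
      (ae_le_or_ae_le_of_pos hXpos _ _),
    hlower, prob_compl_eq_one_sub (measurableSet_le hX (by fun_prop)),
    measure_le_mul_of_frechet hY hX hXY.symm hYpos hXpos hYF hXF (inv_pos.2 ha),
    measure_le_mul_of_frechet hX hY hXY hXpos hYpos hXF hYF (inv_pos.2 hb), inv_inv, inv_inv,
    sub_add_cancel, sub_add_cancel, ← ENNReal.ofReal_one,
    ← ENNReal.ofReal_sub _ (by positivity), ← ENNReal.ofReal_sub _ (by positivity)]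

/-- For independent unit Fréchet `X` and `Y`,
`P(X/(ny-1) < Y < (nx-1)X) = 1 - 1/(nx) - 1/(ny)` whenever `nx > 1` and `ny > 1`. -/
theorem frechet_strip_probability {Ω : Type*} [MeasurableSpace Ω] (μ : Measure Ω)
    [IsProbabilityMeasure μ] (X Y : Ω → ℝ) (hX : Measurable X) (hY : Measurable Y)
    (hXY : IndepFun X Y μ)
    (hXpos : ∀ᵐ ω ∂μ, 0 < X ω) (hYpos : ∀ᵐ ω ∂μ, 0 < Y ω)
    (hXF : ∀ x : ℝ, 0 < x → μ {ω | X ω ≤ x} = ENNReal.ofReal (exp (-1 / x)))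
    (hYF : ∀ x : ℝ, 0 < x → μ {ω | Y ω ≤ x} = ENNReal.ofReal (exp (-1 / x)))
    (n : ℝ) (x y : ℝ) (hx : 0 < x) (hy : 0 < y)
    (hnx : 1 < n * x) (hny : 1 < n * y) :
    μ {ω | X ω / (n * y - 1) < Y ω ∧ Y ω < (n * x - 1) * X ω}
      = ENNReal.ofReal (1 - 1 / (n * x) - 1 / (n * y)) :=
  frechet_strip_probability_general μ X Y hX hY hXY hXpos hYpos hXF hYF n x y hnx hny
end

section
/- Let (Xᵢ, Yᵢ) be i.i.d. with X, Y independent unit Fréchet. Then max_{i≤n} Yᵢ/Xᵢ and max_{i≤n} Xᵢ/Yᵢ are asymptotically independent: lim_{n→∞} P( n^{-1}(max Yᵢ/Xᵢ + 1) ≤ x, n^{-1}(max Xᵢ/Yᵢ + 1) ≤ y ) = exp(-1/x - 1/y) for x, y > 0. -/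
/-!
Write `F` for the unit Fréchet CDF. For one pair, `F(X)` is uniform on `[0, 1]` and
`F(a t) = F(t) ^ (1 / a)`, so `P(Y ≤ a X) = E[F(X) ^ (1 / a)] = a / (a + 1)`. When `a b ≥ 1`,
`Y > a X` and `X > b Y` cannot both hold for positive `X`, `Y` (else `X > a b X ≥ X`), hence
`P(Y / X ≤ a, X / Y ≤ b) = 1 - 1 / (a + 1) - 1 / (b + 1)`. With `a = n x - 1`, `b = n y - 1` the
event about the two maxima is the intersection of `n` independent such events, so its probability
is `(1 - (1 / x + 1 / y) / n) ^ n`, which tends to `exp (-1 / x - 1 / y)`.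
-/

open MeasureTheory ProbabilityTheory Real Filter Set

noncomputable def unitFrechetCDF (t : ℝ) : ℝ := if 0 < t then exp (-1 / t) else 0

lemma measurable_unitFrechetCDF : Measurable unitFrechetCDF :=
  Measurable.ite measurableSet_Ioi (by fun_prop) measurable_const

lemma unitFrechetCDF_le_one (t : ℝ) : unitFrechetCDF t ≤ 1 := by
  unfold unitFrechetCDF
  split_ifs with ht
  · exact exp_le_one_iff.2 (div_nonpos_of_nonpos_of_nonneg (by norm_num) ht.le)
  · exact zero_le_one

lemma unitFrechetCDF_pos_iff {t : ℝ} : 0 < unitFrechetCDF t ↔ 0 < t := by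
  unfold unitFrechetCDF
  split_ifs with ht <;> simp [ht, exp_pos]

lemma unitFrechetCDF_const_mul {a : ℝ} (ha : 0 < a) (t : ℝ) :
    unitFrechetCDF (a * t) = unitFrechetCDF t ^ a⁻¹ := by
  unfold unitFrechetCDF
  by_cases ht : 0 < t
  · rw [if_pos (mul_pos ha ht), if_pos ht, ← exp_mul]
    congr 1
    field_simp
  · rw [if_neg (by nlinarith), if_neg ht, zero_rpow (inv_ne_zero ha.ne')]

lemma unitFrechetCDF_neg_inv_log {v : ℝ} (hv0 : 0 < v) (hv1 : v < 1) :
    unitFrechetCDF (-1 / log v) = v := by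
  have hlog : log v < 0 := log_neg hv0 hv1
  rw [unitFrechetCDF, if_pos (div_pos_of_neg_of_neg (by norm_num) hlog), div_div_eq_mul_div]
  simp [exp_log hv0]

lemma unitFrechetCDF_le_iff {v : ℝ} (hv0 : 0 < v) (hv1 : v < 1) (t : ℝ) :
    unitFrechetCDF t ≤ v ↔ t ≤ -1 / log v := by
  have hlog : log v < 0 := log_neg hv0 hv1
  have hq : 0 < -1 / log v := div_pos_of_neg_of_neg (by norm_num) hlog
  unfold unitFrechetCDF
  split_ifs with ht
  · rw [← le_log_iff_exp_le hv0, div_le_iff₀' ht, le_div_iff_of_neg hlog]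
  · simp only [hv0.le, true_iff]; linarith

lemma ciSup_fin_le_iff {n : ℕ} (hn : 0 < n) {f : ℕ → ℝ} {c : ℝ} :
    (⨆ i : Fin n, f i) ≤ c ↔ ∀ i ∈ Finset.range n, f i ≤ c := by
  have : Nonempty (Fin n) := ⟨⟨0, hn⟩⟩
  rw [ciSup_le_iff (Finite.bddAbove_range _)]
  simp [Fin.forall_iff]

lemma inv_mul_ciSup_add_one_le_iff {n : ℕ} (hn : 0 < n) {f : ℕ → ℝ} {x : ℝ} :
    (n : ℝ)⁻¹ * ((⨆ i : Fin n, f i) + 1) ≤ x ↔ ∀ i ∈ Finset.range n, f i ≤ n * x - 1 := by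
  rw [inv_mul_le_iff₀ (Nat.cast_pos.2 hn), ← le_sub_iff_add_le, ciSup_fin_le_iff hn]

section UnitFrechet

variable {Ω : Type*} [MeasurableSpace Ω] {μ : Measure Ω} {X Y : Ω → ℝ}

def HasUnitFrechetCDF (X : Ω → ℝ) (μ : Measure Ω) : Prop :=
  ∀ t, μ {ω | X ω ≤ t} = ENNReal.ofReal (unitFrechetCDF t)

lemma hasUnitFrechetCDF_of_pos (hpos : ∀ᵐ ω ∂μ, 0 < X ω)
    (hF : ∀ x : ℝ, 0 < x → μ {ω | X ω ≤ x} = ENNReal.ofReal (exp (-1 / x))) :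
    HasUnitFrechetCDF X μ := by
  intro t
  unfold unitFrechetCDF
  split_ifs with ht
  · exact hF t ht
  · rw [ENNReal.ofReal_zero]
    exact measure_mono_null (fun ω (hω : X ω ≤ t) => not_lt.2 (hω.trans (not_lt.1 ht)))
      (ae_iff.1 hpos)

namespace HasUnitFrechetCDF

lemma ae_pos (hF : HasUnitFrechetCDF X μ) : ∀ᵐ ω ∂μ, 0 < X ω := by
  simpa [ae_iff, unitFrechetCDF] using hF 0

variable [IsProbabilityMeasure μ]

lemma map_unitFrechetCDF_eq_restrict_Icc (hX : Measurable X) (hF : HasUnitFrechetCDF X μ) :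
    μ.map (fun ω => unitFrechetCDF (X ω)) = volume.restrict (Icc 0 1) := by
  have hFX : Measurable fun ω => unitFrechetCDF (X ω) := measurable_unitFrechetCDF.comp hX
  have := Measure.isProbabilityMeasure_map (μ := μ) hFX.aemeasurable
  refine Measure.ext_of_Iic _ _ fun v => ?_
  rw [Measure.map_apply hFX measurableSet_Iic, Measure.restrict_apply measurableSet_Iic]
  rcases lt_or_ge v 1 with hv1 | hv1
  · rcases le_or_gt v 0 with hv0 | hv0
    · have hnull : Iic v ∩ Icc (0 : ℝ) 1 ⊆ {0} :=
        fun u hu => le_antisymm (hu.1.trans hv0) hu.2.1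
      rw [measure_mono_null hnull (measure_singleton 0)]
      refine measure_mono_null (fun ω (hω : unitFrechetCDF (X ω) ≤ v) => ?_) (ae_iff.1 hF.ae_pos)
      exact fun hpos => (unitFrechetCDF_pos_iff.2 hpos).not_ge (hω.trans hv0)
    · have hset : (fun ω => unitFrechetCDF (X ω)) ⁻¹' Iic v = {ω | X ω ≤ -1 / log v} := by
        ext ω; exact unitFrechetCDF_le_iff hv0 hv1 (X ω)
      have hIcc : Iic v ∩ Icc (0 : ℝ) 1 = Icc 0 v := by
        ext u; simp only [mem_inter_iff, mem_Iic, mem_Icc]; constructor <;> intro h <;> grind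
      rw [hset, hF, hIcc, Real.volume_Icc, sub_zero, unitFrechetCDF_neg_inv_log hv0 hv1]
  · rw [preimage_eq_univ_iff.2 (fun _ ⟨ω, hω⟩ => hω ▸ (unitFrechetCDF_le_one _).trans hv1),
      inter_eq_right.2 (Icc_subset_Iic_self.trans (Iic_subset_Iic.2 hv1)), measure_univ,
      Real.volume_Icc, sub_zero, ENNReal.ofReal_one]

lemma lintegral_unitFrechetCDF_rpow (hX : Measurable X) (hF : HasUnitFrechetCDF X μ) {p : ℝ}
    (hp : -1 < p) :
    ∫⁻ ω, ENNReal.ofReal (unitFrechetCDF (X ω) ^ p) ∂μ = ENNReal.ofReal (1 / (p + 1)) := by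
  have hint : ∫ v in Icc (0 : ℝ) 1, v ^ p = 1 / (p + 1) := by
    rw [integral_Icc_eq_integral_Ioc, ← intervalIntegral.integral_of_le zero_le_one,
      integral_rpow (Or.inl hp), one_rpow, zero_rpow (by linarith), sub_zero]
  rw [← lintegral_map (f := fun v => ENNReal.ofReal (v ^ p)) (by fun_prop)
      (g := fun ω => unitFrechetCDF (X ω)) (measurable_unitFrechetCDF.comp hX),
    hF.map_unitFrechetCDF_eq_restrict_Icc hX, ← hint, ofReal_integral_eq_lintegral_ofReal]
  · exact (integrableOn_Icc_iff_integrableOn_Ioc (f := fun v : ℝ => v ^ p)).2 <|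
      (intervalIntegrable_iff_integrableOn_Ioc_of_le zero_le_one).1
        (intervalIntegral.intervalIntegrable_rpow' hp)
  · exact ae_restrict_of_forall_mem measurableSet_Icc fun v hv => rpow_nonneg hv.1 p

lemma measure_le_const_mul (hX : Measurable X) (hY : Measurable Y) (hXY : IndepFun X Y μ)
    (hXF : HasUnitFrechetCDF X μ) (hYF : HasUnitFrechetCDF Y μ) {a : ℝ} (ha : 0 < a) :
    μ {ω | Y ω ≤ a * X ω} = ENNReal.ofReal (a / (a + 1)) := by
  have hS : MeasurableSet {p : ℝ × ℝ | p.2 ≤ a * p.1} :=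
    measurableSet_le measurable_snd (measurable_fst.const_mul a)
  calc μ {ω | Y ω ≤ a * X ω}
      = ((μ.map X).prod (μ.map Y)) {p : ℝ × ℝ | p.2 ≤ a * p.1} := by
        rw [← (indepFun_iff_map_prod_eq_prod_map_map hX.aemeasurable hY.aemeasurable).1 hXY,
          Measure.map_apply (hX.prodMk hY) hS]
        rfl
    _ = ∫⁻ ω, ENNReal.ofReal (unitFrechetCDF (X ω) ^ a⁻¹) ∂μ := by
        rw [Measure.prod_apply hS, lintegral_map (measurable_measure_prodMk_left hS) hX]
        congr 1 with ω
        rw [← unitFrechetCDF_const_mul ha, ← hYF]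
        exact Measure.map_apply hY (s := Iic (a * X ω)) measurableSet_Iic
    _ = ENNReal.ofReal (a / (a + 1)) := by
        rw [hXF.lintegral_unitFrechetCDF_rpow hX (by linarith [inv_pos.2 ha])]
        congr 1
        field_simp
        ring

lemma measureReal_div_le_and_div_le (hX : Measurable X) (hY : Measurable Y)
    (hXY : IndepFun X Y μ) (hXF : HasUnitFrechetCDF X μ) (hYF : HasUnitFrechetCDF Y μ)
    {a b : ℝ} (ha : 0 < a) (hb : 0 < b) (hab : 1 ≤ a * b) :
    μ.real {ω | Y ω / X ω ≤ a ∧ X ω / Y ω ≤ b} = 1 - 1 / (a + 1) - 1 / (b + 1) := by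
  set A : Set Ω := {ω | Y ω ≤ a * X ω}
  set B : Set Ω := {ω | X ω ≤ b * Y ω}
  have hpos : ∀ᵐ ω ∂μ, 0 < X ω ∧ 0 < Y ω := hXF.ae_pos.and hYF.ae_pos
  have hevent : {ω | Y ω / X ω ≤ a ∧ X ω / Y ω ≤ b} =ᵐ[μ] (A ∩ B : Set Ω) := by
    filter_upwards [hpos] with ω ⟨hx, hy⟩
    exact propext (and_congr (div_le_iff₀ hx) (div_le_iff₀ hy))
  have hunion : (A ∪ B : Set Ω) =ᵐ[μ] (univ : Set Ω) := by
    filter_upwards [hpos] with ω ⟨hx, hy⟩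
    refine eq_true (show ω ∈ A ∪ B from ?_)
    by_contra h
    simp only [A, B, mem_union, mem_ofPred_eq, not_or, not_le] at h
    nlinarith [mul_le_mul_of_nonneg_right hab hx.le]
  have hA : μ.real A = a / (a + 1) := by
    rw [measureReal_def, hXF.measure_le_const_mul hX hY hXY hYF ha,
      ENNReal.toReal_ofReal (by positivity)]
  have hB : μ.real B = b / (b + 1) := by
    rw [measureReal_def, hYF.measure_le_const_mul hY hX hXY.symm hXF hb,
      ENNReal.toReal_ofReal (by positivity)]
  have hsum := measureReal_union_add_inter (μ := μ) (s := A) (t := B)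
    (measurableSet_le hX (hY.const_mul b))
  rw [measureReal_congr hunion, probReal_univ, hA, hB] at hsum
  rw [measureReal_congr hevent]
  field_simp at hsum ⊢
  linarith

end HasUnitFrechetCDF

end UnitFrechet

theorem frechet_max_quotients_asymp_indep_general {Ω : Type*} [MeasurableSpace Ω] (μ : Measure Ω)
    [IsProbabilityMeasure μ] (X Y : ℕ → Ω → ℝ)
    (hX : ∀ i, Measurable (X i)) (hY : ∀ i, Measurable (Y i))
    (hiid : iIndepFun (fun i ω => (X i ω, Y i ω)) μ)
    (hindep : ∀ i, IndepFun (X i) (Y i) μ)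
    (hXpos : ∀ i, ∀ᵐ ω ∂μ, 0 < X i ω) (hYpos : ∀ i, ∀ᵐ ω ∂μ, 0 < Y i ω)
    (hXF : ∀ i, ∀ x : ℝ, 0 < x → μ {ω | X i ω ≤ x} = ENNReal.ofReal (exp (-1 / x)))
    (hYF : ∀ i, ∀ x : ℝ, 0 < x → μ {ω | Y i ω ≤ x} = ENNReal.ofReal (exp (-1 / x))) :
    ∀ x y : ℝ, 0 < x → 0 < y →
      Tendsto (fun n : ℕ =>
          (μ {ω | (n : ℝ)⁻¹ * ((⨆ i : Fin n, Y i ω / X i ω) + 1) ≤ x ∧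
                  (n : ℝ)⁻¹ * ((⨆ i : Fin n, X i ω / Y i ω) + 1) ≤ y}).toReal)
        atTop (nhds (exp (-1 / x - 1 / y))) := by
  intro x y hx hy
  have hlarge : ∀ {z : ℝ}, 0 < z → ∀ᶠ n : ℕ in atTop, 2 ≤ (n : ℝ) * z := fun hz =>
    (tendsto_natCast_atTop_atTop.atTop_mul_const hz).eventually_ge_atTop 2
  refine (tendsto_one_add_div_pow_exp (-1 / x - 1 / y)).congr' ?_
  filter_upwards [hlarge hx, hlarge hy, eventually_gt_atTop 0] with n hnx hny hn
  set S : Set (ℝ × ℝ) := {p | p.2 / p.1 ≤ n * x - 1 ∧ p.1 / p.2 ≤ n * y - 1}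
  have hS : MeasurableSet S :=
    (measurableSet_le (measurable_snd.div measurable_fst) measurable_const).inter
      (measurableSet_le (measurable_fst.div measurable_snd) measurable_const)
  have hpair (i : ℕ) : μ.real ((fun ω => (X i ω, Y i ω)) ⁻¹' S) = 1 + (-1 / x - 1 / y) / n := by
    refine ((hasUnitFrechetCDF_of_pos (hXpos i) (hXF i)).measureReal_div_le_and_div_le (hX i)
      (hY i) (hindep i) (hasUnitFrechetCDF_of_pos (hYpos i) (hYF i)) (by linarith)
      (by linarith) (by nlinarith)).trans ?_
    rw [sub_add_cancel, sub_add_cancel]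
    field_simp
    ring
  have hevent : {ω | (n : ℝ)⁻¹ * ((⨆ i : Fin n, Y i ω / X i ω) + 1) ≤ x ∧
      (n : ℝ)⁻¹ * ((⨆ i : Fin n, X i ω / Y i ω) + 1) ≤ y}
      = ⋂ i ∈ Finset.range n, (fun ω => (X i ω, Y i ω)) ⁻¹' S := by
    ext ω
    simp only [mem_ofPred_eq, mem_iInter, mem_preimage, S]
    rw [inv_mul_ciSup_add_one_le_iff (f := fun i => Y i ω / X i ω) hn,
      inv_mul_ciSup_add_one_le_iff (f := fun i => X i ω / Y i ω) hn]
    exact forall₂_and.symm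
  rw [hevent, hiid.measure_inter_preimage_eq_mul _ (fun _ _ => hS), ENNReal.toReal_prod]
  simp only [← measureReal_def, hpair, Finset.prod_const, Finset.card_range]

/-- For an i.i.d. sample `(Xᵢ, Yᵢ)` from independent unit Fréchet `X` and `Y`, the maxima
`max_{i≤n} Yᵢ/Xᵢ` and `max_{i≤n} Xᵢ/Yᵢ` are asymptotically independent:
`lim_{n→∞} P(n⁻¹(max Yᵢ/Xᵢ + 1) ≤ x, n⁻¹(max Xᵢ/Yᵢ + 1) ≤ y) = exp(-1/x - 1/y)`. -/
theorem frechet_max_quotients_asymp_indep {Ω : Type*} [MeasurableSpace Ω] (μ : Measure Ω)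
    [IsProbabilityMeasure μ] (X Y : ℕ → Ω → ℝ)
    (hX : ∀ i, Measurable (X i)) (hY : ∀ i, Measurable (Y i))
    (hiid : iIndepFun (fun i ω => (X i ω, Y i ω)) μ)
    (hident : ∀ i, Measure.map (fun ω => (X i ω, Y i ω)) μ
      = Measure.map (fun ω => (X 0 ω, Y 0 ω)) μ)
    (hindep : ∀ i, IndepFun (X i) (Y i) μ)
    (hXpos : ∀ i, ∀ᵐ ω ∂μ, 0 < X i ω) (hYpos : ∀ i, ∀ᵐ ω ∂μ, 0 < Y i ω)
    (hXF : ∀ i, ∀ x : ℝ, 0 < x → μ {ω | X i ω ≤ x} = ENNReal.ofReal (exp (-1 / x)))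
    (hYF : ∀ i, ∀ x : ℝ, 0 < x → μ {ω | Y i ω ≤ x} = ENNReal.ofReal (exp (-1 / x))) :
    ∀ x y : ℝ, 0 < x → 0 < y →
      Tendsto (fun n : ℕ =>
          (μ {ω | (n : ℝ)⁻¹ * ((⨆ i : Fin n, Y i ω / X i ω) + 1) ≤ x ∧
                  (n : ℝ)⁻¹ * ((⨆ i : Fin n, X i ω / Y i ω) + 1) ≤ y}).toReal)
        atTop (nhds (exp (-1 / x - 1 / y))) :=
  frechet_max_quotients_asymp_indep_general μ X Y hX hY hiid hindep hXpos hYpos hXF hYF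
end

section
/- If ζ₁ and ζ₂ are independent unit Fréchet random variables, then 1/ζ₁ + 1/ζ₂ is gamma(2,1) distributed; consequently the limit law of n·qₙ, given by the distribution of (1/ζ₁ + 1/ζ₂) where (n^{-1}(max Yᵢ/Xᵢ+1), n^{-1}(max Xᵢ/Yᵢ+1)) → (ζ₁, ζ₂) jointly, is gamma(2,1). -/
/-!
For unit Fréchet `ζ` we have `P(1/ζ ≥ x) = P(ζ ≤ 1/x) = e^{-x}` for `x > 0`, so `1/ζ` is
exponential(1). By independence the law of `1/ζ₁ + 1/ζ₂` is the convolution of two exponential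
laws, whose CDF `∫₀ᵗ e^{-x} (1 - e^{-(t-x)}) dx = 1 - (1 + t) e^{-t}` is that of gamma(2,1).
-/

open MeasureTheory ProbabilityTheory Real Set

lemma expMeasure_Ici {r : ℝ} (hr : 0 < r) (x : ℝ) :
    expMeasure r (Ici x) = ENNReal.ofReal (exp (-(r * max x 0))) := by
  have := isProbabilityMeasure_expMeasure hr
  have : NullSingletonClass (expMeasure r) := by unfold expMeasure gammaMeasure; infer_instance
  rw [← compl_Iio, prob_compl_eq_one_sub measurableSet_Iio, measure_congr Iio_ae_eq_Iic,
    ← ofReal_cdf, cdf_expMeasure_eq hr]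
  rcases le_total 0 x with hx | hx
  · rw [if_pos hx, max_eq_left hx, ENNReal.ofReal_sub _ (exp_pos _).le, ENNReal.ofReal_one,
      ENNReal.sub_sub_cancel ENNReal.one_ne_top (ENNReal.ofReal_le_one.mpr _)]
    exact exp_le_one_iff.mpr (by nlinarith)
  · rcases hx.eq_or_lt with rfl | hx
    · simp
    · simp [if_neg hx.not_ge, max_eq_right hx.le]

lemma map_one_div_eq_expMeasure {Ω : Type*} [MeasurableSpace Ω] {μ : Measure Ω}
    [IsProbabilityMeasure μ] {ζ : Ω → ℝ} (hζ : Measurable ζ) (hpos : ∀ᵐ ω ∂μ, 0 < ζ ω)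
    (hF : ∀ x : ℝ, 0 < x → μ {ω | ζ ω ≤ x} = ENNReal.ofReal (exp (-1 / x))) :
    μ.map (fun ω ↦ 1 / ζ ω) = expMeasure 1 := by
  have hinv : Measurable fun ω ↦ 1 / ζ ω := by fun_prop
  have := Measure.isProbabilityMeasure_map (μ := μ) hinv.aemeasurable
  refine Measure.ext_of_Ici _ _ fun x ↦ ?_
  rw [Measure.map_apply hinv measurableSet_Ici, expMeasure_Ici one_pos, one_mul]
  rcases lt_or_ge 0 x with hx | hx
  · have hpre : (fun ω ↦ 1 / ζ ω) ⁻¹' Ici x =ᵐ[μ] {ω | ζ ω ≤ 1 / x} := by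
      filter_upwards [hpos] with ω hω
      exact propext (le_one_div hx hω)
    rw [measure_congr hpre, hF _ (by positivity), max_eq_left hx.le]
    field_simp
  · have hpre : (fun ω ↦ 1 / ζ ω) ⁻¹' Ici x =ᵐ[μ] univ := by
      filter_upwards [hpos] with ω hω
      exact propext (iff_true_intro (hx.trans (by positivity)))
    rw [measure_congr hpre, measure_univ, max_eq_right hx, neg_zero, exp_zero,
      ENNReal.ofReal_one]

lemma conv_apply_Iic (μ ν : Measure ℝ) [SFinite ν] (t : ℝ) :
    (μ ∗ ν) (Iic t) = ∫⁻ x, ν (Iic (t - x)) ∂μ := by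
  rw [Measure.conv, Measure.map_apply measurable_add measurableSet_Iic,
    Measure.prod_apply (measurable_add measurableSet_Iic)]
  congr with x
  congr with y
  simp [le_sub_iff_add_le']

lemma integral_mul_exp_neg_mul_sub_const (r t : ℝ) :
    ∫ x in (0 : ℝ)..t, (r * exp (-(r * x)) - r * exp (-(r * t)))
      = 1 - (1 + r * t) * exp (-(r * t)) := by
  have hderiv (x : ℝ) : HasDerivAt (fun y ↦ -exp (-(r * y)) - r * exp (-(r * t)) * y)
      (r * exp (-(r * x)) - r * exp (-(r * t))) x := by
    convert! (((hasDerivAt_id x).const_mul r).neg.exp.neg).sub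
      ((hasDerivAt_id x).const_mul (r * exp (-(r * t)))) using 1; simp [mul_comm]
  rw [intervalIntegral.integral_eq_sub_of_hasDerivAt (fun x _ ↦ hderiv x)
    (by apply Continuous.intervalIntegrable; fun_prop)]
  simp
  ring

lemma expMeasure_conv_expMeasure_Iic {r : ℝ} (hr : 0 < r) {t : ℝ} (ht : 0 ≤ t) :
    (expMeasure r ∗ expMeasure r) (Iic t)
      = ENNReal.ofReal (1 - (1 + r * t) * exp (-(r * t))) := by
  have := isProbabilityMeasure_expMeasure hr
  have hcdf (y : ℝ) :
      expMeasure r (Iic y) = ENNReal.ofReal (if 0 ≤ y then 1 - exp (-(r * y)) else 0) := by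
    rw [← ofReal_cdf, cdf_expMeasure_eq hr]
  have hanti : Antitone fun x ↦ expMeasure r (Iic (t - x)) := fun x y hxy ↦
    measure_mono (Iic_subset_Iic.mpr (by linarith))
  have hpt : exponentialPDF r * (fun x ↦ expMeasure r (Iic (t - x)))
      = (Icc 0 t).indicator
          fun x ↦ ENNReal.ofReal (r * exp (-(r * x)) - r * exp (-(r * t))) := by
    ext x
    simp only [Pi.mul_apply, hcdf]
    rcases lt_or_ge x 0 with hx0 | hx0
    · simp [exponentialPDF_of_neg hx0, indicator_of_notMem fun h : x ∈ Icc 0 t ↦ hx0.not_ge h.1]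
    rcases le_or_gt x t with hxt | hxt
    · rw [exponentialPDF_of_nonneg hx0, if_pos (sub_nonneg.mpr hxt),
        indicator_of_mem (mem_Icc.mpr ⟨hx0, hxt⟩), ← ENNReal.ofReal_mul (by positivity),
        mul_one_sub, mul_assoc, ← exp_add]
      ring_nf
    · simp [hxt.not_ge]
  have hnonneg : ∀ x ∈ Icc 0 t, 0 ≤ r * exp (-(r * x)) - r * exp (-(r * t)) := fun x hx ↦
    sub_nonneg.mpr (mul_le_mul_of_nonneg_left (exp_le_exp.mpr (by nlinarith [hx.2])) hr.le)
  rw [conv_apply_Iic]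
  change ∫⁻ x, _ ∂(volume.withDensity (exponentialPDF r)) = _
  rw [lintegral_withDensity_eq_lintegral_mul _ (f := exponentialPDF r)
      (measurable_exponentialPDFReal r).ennreal_ofReal hanti.measurable,
    hpt, lintegral_indicator measurableSet_Icc,
    ← ofReal_integral_eq_lintegral_ofReal (by fun_prop : Continuous fun x ↦
      r * exp (-(r * x)) - r * exp (-(r * t))).integrableOn_Icc
      ((ae_restrict_iff' measurableSet_Icc).mpr (.of_forall hnonneg)),
    integral_Icc_eq_integral_Ioc, ← intervalIntegral.integral_of_le ht,
    integral_mul_exp_neg_mul_sub_const]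

lemma integral_Ioo_mul_exp_neg {t : ℝ} (ht : 0 ≤ t) :
    ∫ s in Ioo 0 t, s * exp (-s) = 1 - (1 + t) * exp (-t) := by
  have hderiv (x : ℝ) : HasDerivAt (fun s ↦ -((1 + s) * exp (-s))) (x * exp (-x)) x := by
    convert! (((hasDerivAt_id x).const_add 1).mul (hasDerivAt_id x).neg.exp).neg using 1
    simp
    ring
  rw [← integral_Ioc_eq_integral_Ioo, ← intervalIntegral.integral_of_le ht,
    intervalIntegral.integral_eq_sub_of_hasDerivAt (fun x _ ↦ hderiv x)
      (by apply Continuous.intervalIntegrable; fun_prop)]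
  simp
  ring

/-- If `ζ₁` and `ζ₂` are independent unit Fréchet random variables, then
`1/ζ₁ + 1/ζ₂` is gamma(2,1) distributed: its CDF at every `t > 0` equals
`∫_0^t s e^{-s} ds`. -/
theorem inv_frechet_sum_gamma {Ω : Type*} [MeasurableSpace Ω] (μ : Measure Ω)
    [IsProbabilityMeasure μ] (ζ₁ ζ₂ : Ω → ℝ) (h1 : Measurable ζ₁) (h2 : Measurable ζ₂)
    (hindep : IndepFun ζ₁ ζ₂ μ)
    (h1pos : ∀ᵐ ω ∂μ, 0 < ζ₁ ω) (h2pos : ∀ᵐ ω ∂μ, 0 < ζ₂ ω)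
    (h1F : ∀ x : ℝ, 0 < x → μ {ω | ζ₁ ω ≤ x} = ENNReal.ofReal (exp (-1 / x)))
    (h2F : ∀ x : ℝ, 0 < x → μ {ω | ζ₂ ω ≤ x} = ENNReal.ofReal (exp (-1 / x))) :
    ∀ t : ℝ, 0 < t →
      μ {ω | 1 / ζ₁ ω + 1 / ζ₂ ω ≤ t}
        = ENNReal.ofReal (∫ s in Set.Ioo (0 : ℝ) t, s * exp (-s)) := by
  intro t ht
  have hinv : Measurable fun x : ℝ ↦ 1 / x := by fun_prop
  have hlaw : μ.map (fun ω ↦ 1 / ζ₁ ω + 1 / ζ₂ ω) = expMeasure 1 ∗ expMeasure 1 := by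
    calc μ.map (fun ω ↦ 1 / ζ₁ ω + 1 / ζ₂ ω)
        = μ.map (fun ω ↦ 1 / ζ₁ ω) ∗ μ.map (fun ω ↦ 1 / ζ₂ ω) :=
          (hindep.comp hinv hinv).map_add_eq_map_conv_map (hinv.comp h1) (hinv.comp h2)
      _ = expMeasure 1 ∗ expMeasure 1 := by
          rw [map_one_div_eq_expMeasure h1 h1pos h1F, map_one_div_eq_expMeasure h2 h2pos h2F]
  calc μ {ω | 1 / ζ₁ ω + 1 / ζ₂ ω ≤ t}
      = μ.map (fun ω ↦ 1 / ζ₁ ω + 1 / ζ₂ ω) (Iic t) :=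
        (Measure.map_apply ((hinv.comp h1).add (hinv.comp h2)) measurableSet_Iic).symm
    _ = _ := by
      rw [hlaw, expMeasure_conv_expMeasure_Iic one_pos ht.le, integral_Ioo_mul_exp_neg ht.le,
        one_mul]
end

section
/- In the setting of Example 2.1 (X = max_l α_{l1} Z_l, Y = max_l α_{l2} Z_l, Z_l i.i.d. unit Fréchet, with c₁ = max_l α_{l1}/α_{l2}, c₂ = max_l α_{l2}/α_{l1}), for an i.i.d. sample (Xᵢ,Yᵢ) one has max_{i≤n} Xᵢ/Yᵢ → c₁ and max_{i≤n} Yᵢ/Xᵢ → c₂ almost surely, and hence qₙ → (c₁+c₂-2)/(c₁c₂-1) almost surely as n → ∞ (assuming c₁c₂ > 1). -/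
/-!
With positive probability a sample has its component `Z_{l₀}` at an index `l₀` maximising
`α_{l1}/α_{l2}` so large, and all other components so small (`≤ 1`), that `α_{l₀2} Z_{l₀}`
alone realises `Y`; then `X/Y ≥ α_{l₀1}/α_{l₀2} = c₁`, while `X/Y ≤ c₁` always. By the second
Borel–Cantelli lemma such a sample occurs almost surely, so the running maximum of `Xᵢ/Yᵢ` is
eventually equal to `c₁`, likewise that of `Yᵢ/Xᵢ` to `c₂`, and `qₙ` is eventually constant.
-/

open MeasureTheory ProbabilityTheory Real Filter

section Deterministic

variable {ι : Type*} [Finite ι] {a b z : ι → ℝ}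

theorem iSup_mul_div_iSup_mul_le [Nonempty ι] (ha : ∀ l, 0 < a l) (hb : ∀ l, 0 < b l)
    (hz : ∀ l, 0 ≤ z l) : (⨆ l, a l * z l) / (⨆ l, b l * z l) ≤ ⨆ l, a l / b l := by
  have hbdd : ∀ f : ι → ℝ, BddAbove (Set.range f) := fun f => (Set.finite_range f).bddAbove
  obtain ⟨l₀⟩ := ‹Nonempty ι›
  have hc : 0 ≤ ⨆ l, a l / b l :=
    le_ciSup_of_le (hbdd (fun l => a l / b l)) l₀ (div_pos (ha l₀) (hb l₀)).le
  have hY : 0 ≤ ⨆ l, b l * z l :=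
    le_ciSup_of_le (hbdd (fun l => b l * z l)) l₀ (mul_nonneg (hb l₀).le (hz l₀))
  refine div_le_of_le_mul₀ hY hc (ciSup_le fun l => ?_)
  calc a l * z l = a l / b l * (b l * z l) := by field_simp [(hb l).ne']
    _ ≤ (⨆ l, a l / b l) * ⨆ l, b l * z l :=
      mul_le_mul (le_ciSup (hbdd (fun l => a l / b l)) l) (le_ciSup (hbdd (fun l => b l * z l)) l)
        (mul_nonneg (hb l).le (hz l)) hc

theorem div_le_iSup_mul_div_iSup_mul {l₀ : ι} (hb₀ : 0 < b l₀) (hz₀ : 0 < z l₀)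
    (hdom : ∀ l, b l * z l ≤ b l₀ * z l₀) :
    a l₀ / b l₀ ≤ (⨆ l, a l * z l) / (⨆ l, b l * z l) := by
  have : Nonempty ι := ⟨l₀⟩
  have hbdd : ∀ f : ι → ℝ, BddAbove (Set.range f) := fun f => (Set.finite_range f).bddAbove
  have hY : ⨆ l, b l * z l = b l₀ * z l₀ :=
    le_antisymm (ciSup_le hdom) (le_ciSup (hbdd (fun l => b l * z l)) l₀)
  calc a l₀ / b l₀ = a l₀ * z l₀ / (b l₀ * z l₀) := (mul_div_mul_right _ _ hz₀.ne').symm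
    _ ≤ (⨆ l, a l * z l) / (⨆ l, b l * z l) := by
      rw [hY]
      exact div_le_div_of_nonneg_right (le_ciSup (hbdd (fun l => a l * z l)) l₀)
        (mul_pos hb₀ hz₀).le

end Deterministic

theorem eventually_iSup_fin_eq {r : ℕ → ℝ} {c : ℝ} (hle : ∀ i, r i ≤ c) (hge : ∃ i, c ≤ r i) :
    ∀ᶠ n in atTop, ⨆ i : Fin n, r i = c := by
  obtain ⟨i₀, hi₀⟩ := hge
  filter_upwards [eventually_gt_atTop i₀] with n hn
  have : Nonempty (Fin n) := ⟨⟨i₀, hn⟩⟩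
  exact le_antisymm (ciSup_le fun i => hle i)
    (hi₀.trans (le_ciSup (f := fun i : Fin n => r i) (Set.finite_range _).bddAbove ⟨i₀, hn⟩))

section Probability

variable {Ω : Type*} [MeasurableSpace Ω] {μ : Measure Ω}

theorem ae_frequently_mem_of_iIndepSet {B : ℕ → Set Ω} (hB : ∀ i, MeasurableSet (B i))
    (hind : iIndepSet B μ) {p : ENNReal} (hp : p ≠ 0) (hpB : ∀ i, p ≤ μ (B i)) :
    ∀ᵐ ω ∂μ, ∃ᶠ i in atTop, ω ∈ B i := by
  have := hind.isProbabilityMeasure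
  have hsum : ∑' i, μ (B i) = ⊤ :=
    top_unique ((ENNReal.tsum_const_eq_top_of_ne_zero hp).symm.le.trans (ENNReal.tsum_le_tsum hpB))
  have hmem : limsup B atTop ∈ ae μ :=
    (mem_ae_iff_prob_eq_one (MeasurableSet.measurableSet_limsup hB)).2
      (measure_limsup_eq_one hB hind hsum)
  filter_upwards [hmem] with ω hω using mem_limsup_iff_frequently_mem.1 hω

variable {ι κ β : Type*} [Fintype κ] [MeasurableSpace β] {Z : ι → κ → Ω → β}

theorem measure_biInter_iInter_preimage (h : iIndepFun (fun p : ι × κ => Z p.1 p.2) μ)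
    {s : κ → Set β} (hs : ∀ l, MeasurableSet (s l)) (S : Finset ι) :
    μ (⋂ i ∈ S, ⋂ l, Z i l ⁻¹' s l) = ∏ i ∈ S, ∏ l, μ (Z i l ⁻¹' s l) := by
  have h1 := h.measure_inter_preimage_eq_mul (S ×ˢ Finset.univ)
      (sets := fun p => s p.2) (fun p _ => hs p.2)
  rw [← Finset.prod_product', ← h1]
  congr 1
  ext ω
  simp only [Set.mem_iInter, Set.mem_preimage, Finset.mem_product, Finset.mem_univ, and_true,
    Prod.forall]
  exact forall_congr' fun i => forall_comm

theorem measure_iInter_preimage (h : iIndepFun (fun p : ι × κ => Z p.1 p.2) μ)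
    {s : κ → Set β} (hs : ∀ l, MeasurableSet (s l)) (i : ι) :
    μ (⋂ l, Z i l ⁻¹' s l) = ∏ l, μ (Z i l ⁻¹' s l) := by
  simpa using measure_biInter_iInter_preimage h hs {i}

theorem iIndepSet_iInter_preimage (hZ : ∀ i l, Measurable (Z i l))
    (h : iIndepFun (fun p : ι × κ => Z p.1 p.2) μ)
    {s : κ → Set β} (hs : ∀ l, MeasurableSet (s l)) :
    iIndepSet (fun i => ⋂ l, Z i l ⁻¹' s l) μ := by
  rw [iIndepSet_iff_meas_biInter fun i => MeasurableSet.iInter fun l => hZ i l (hs l)]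
  intro S
  rw [measure_biInter_iInter_preimage h hs]
  exact Finset.prod_congr rfl fun i _ => (measure_iInter_preimage h hs i).symm

end Probability

section Frechet

variable {Ω : Type*} [MeasurableSpace Ω] {μ : Measure Ω}

def IsUnitFrechet (μ : Measure Ω) (Z : Ω → ℝ) : Prop :=
  ∀ x : ℝ, 0 < x → μ {ω | Z ω ≤ x} = ENNReal.ofReal (exp (-1 / x))

theorem IsUnitFrechet.measure_preimage_Ioi [IsProbabilityMeasure μ] {Z : Ω → ℝ}
    (hF : IsUnitFrechet μ Z) (hZ : Measurable Z) {x : ℝ} (hx : 0 < x) :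
    μ (Z ⁻¹' Set.Ioi x) = 1 - ENNReal.ofReal (exp (-1 / x)) := by
  rw [← hF x hx, ← prob_compl_eq_one_sub (measurableSet_le hZ measurable_const)]
  congr 1
  ext ω
  simp

variable [IsProbabilityMeasure μ] {κ : Type*} [Fintype κ] [DecidableEq κ] {Z : ℕ → κ → Ω → ℝ}

theorem ae_frequently_gt_and_le_one_of_isUnitFrechet (hZ : ∀ i l, Measurable (Z i l))
    (hindep : iIndepFun (fun p : ℕ × κ => Z p.1 p.2) μ) (hF : ∀ i l, IsUnitFrechet μ (Z i l))
    (l₀ : κ) {M : ℝ} (hM : 0 < M) :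
    ∀ᵐ ω ∂μ, ∃ᶠ i in atTop, M < Z i l₀ ω ∧ ∀ l, l ≠ l₀ → Z i l ω ≤ 1 := by
  let s : κ → Set ℝ := fun l => if l = l₀ then Set.Ioi M else Set.Iic 1
  let q : κ → ENNReal := fun l =>
    if l = l₀ then 1 - ENNReal.ofReal (exp (-1 / M)) else ENNReal.ofReal (exp (-1))
  have hs : ∀ l, MeasurableSet (s l) := fun l => by by_cases h : l = l₀ <;> simp [s, h]
  have hq : ∀ i l, μ (Z i l ⁻¹' s l) = q l := fun i l => by
    by_cases h : l = l₀
    · simp only [s, q, h, if_true]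
      exact (hF i l₀).measure_preimage_Ioi (hZ i l₀) hM
    · simp only [s, q, h, if_false]
      exact (hF i l 1 one_pos).trans (by rw [div_one])
  have hq0 : ∏ l, q l ≠ 0 := Finset.prod_ne_zero_iff.2 fun l _ => by
    by_cases h : l = l₀
    · simp only [q, h, if_true, ne_eq, tsub_eq_zero_iff_le, not_le, ENNReal.ofReal_lt_one,
        exp_lt_one_iff]
      exact div_neg_of_neg_of_pos (by norm_num) hM
    · simp [q, h, exp_pos]
  have hB := ae_frequently_mem_of_iIndepSet
    (fun i => MeasurableSet.iInter fun l => hZ i l (hs l)) (iIndepSet_iInter_preimage hZ hindep hs)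
    hq0 fun i => by rw [measure_iInter_preimage hindep hs i, Finset.prod_congr rfl fun l _ => hq i l]
  filter_upwards [hB] with ω hω
  refine hω.mono fun i hi => ⟨?_, fun l hl => ?_⟩
  · simpa [s] using Set.mem_iInter.1 hi l₀
  · simpa [s, hl] using Set.mem_iInter.1 hi l

theorem ae_exists_iSup_div_le_iSup_mul_div_iSup_mul [Nonempty κ]
    (hZ : ∀ i l, Measurable (Z i l)) (hindep : iIndepFun (fun p : ℕ × κ => Z p.1 p.2) μ)
    (hF : ∀ i l, IsUnitFrechet μ (Z i l)) {a b : κ → ℝ} (hb : ∀ l, 0 < b l) :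
    ∀ᵐ ω ∂μ, ∃ i, (⨆ l, a l / b l) ≤ (⨆ l, a l * Z i l ω) / (⨆ l, b l * Z i l ω) := by
  obtain ⟨l₀, hl₀⟩ := Finite.exists_max fun l => a l / b l
  set M := (∑ l, b l) / b l₀
  have hM : 0 < M := div_pos (Finset.sum_pos (fun l _ => hb l) Finset.univ_nonempty) (hb l₀)
  filter_upwards [ae_frequently_gt_and_le_one_of_isUnitFrechet hZ hindep hF l₀ hM] with ω hω
  obtain ⟨i, hZ₀, hZl⟩ := hω.exists
  refine ⟨i, (ciSup_le hl₀).trans (div_le_iSup_mul_div_iSup_mul (hb l₀) (hM.trans hZ₀) fun l => ?_)⟩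
  by_cases h : l = l₀
  · rw [h]
  calc b l * Z i l ω ≤ b l := mul_le_of_le_one_right (hb l).le (hZl l h)
    _ ≤ ∑ l, b l := Finset.single_le_sum (fun l _ => (hb l).le) (Finset.mem_univ l)
    _ = b l₀ * M := (mul_div_cancel₀ _ (hb l₀).ne').symm
    _ ≤ b l₀ * Z i l₀ ω := mul_le_mul_of_nonneg_left hZ₀.le (hb l₀).le

end Frechet

theorem m4_quotient_correlation_limit_general {Ω : Type*} [MeasurableSpace Ω] (μ : Measure Ω)
    [IsProbabilityMeasure μ] (L : ℕ) (hL : 0 < L) (Z : ℕ → Fin L → Ω → ℝ)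
    (hZ : ∀ i l, Measurable (Z i l))
    (hindep : iIndepFun (fun p : ℕ × Fin L => Z p.1 p.2) μ)
    (hZpos : ∀ i l, ∀ᵐ ω ∂μ, 0 < Z i l ω)
    (hZF : ∀ i l, ∀ x : ℝ, 0 < x →
      μ {ω | Z i l ω ≤ x} = ENNReal.ofReal (exp (-1 / x)))
    (α₁ α₂ : Fin L → ℝ) (hα₁ : ∀ l, 0 < α₁ l) (hα₂ : ∀ l, 0 < α₂ l)
    (X Y : ℕ → Ω → ℝ)
    (hXdef : ∀ i ω, X i ω = ⨆ l, α₁ l * Z i l ω)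
    (hYdef : ∀ i ω, Y i ω = ⨆ l, α₂ l * Z i l ω)
    (c₁ c₂ : ℝ) (hc₁ : c₁ = ⨆ l, α₁ l / α₂ l) (hc₂ : c₂ = ⨆ l, α₂ l / α₁ l) :
    ∀ᵐ ω ∂μ,
      Tendsto (fun n : ℕ => ⨆ i : Fin n, X i ω / Y i ω) atTop (nhds c₁) ∧
      Tendsto (fun n : ℕ => ⨆ i : Fin n, Y i ω / X i ω) atTop (nhds c₂) ∧
      Tendsto (fun n : ℕ =>
          ((⨆ i : Fin n, Y i ω / X i ω) + (⨆ i : Fin n, X i ω / Y i ω) - 2) /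
          ((⨆ i : Fin n, Y i ω / X i ω) * (⨆ i : Fin n, X i ω / Y i ω) - 1))
        atTop (nhds ((c₁ + c₂ - 2) / (c₁ * c₂ - 1))) := by
  have : Nonempty (Fin L) := ⟨⟨0, hL⟩⟩
  have hZnn : ∀ᵐ ω ∂μ, ∀ i l, 0 ≤ Z i l ω :=
    ae_all_iff.2 fun i => ae_all_iff.2 fun l => (hZpos i l).mono fun _ h => h.le
  filter_upwards [hZnn, ae_exists_iSup_div_le_iSup_mul_div_iSup_mul hZ hindep hZF hα₂,
    ae_exists_iSup_div_le_iSup_mul_div_iSup_mul hZ hindep hZF hα₁] with ω hZω h₁ h₂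
  subst hc₁ hc₂
  have e₁ : ∀ᶠ n in atTop, ⨆ i : Fin n, X i ω / Y i ω = ⨆ l, α₁ l / α₂ l := by
    simp only [hXdef, hYdef]
    exact eventually_iSup_fin_eq (fun i => iSup_mul_div_iSup_mul_le hα₁ hα₂ (hZω i)) h₁
  have e₂ : ∀ᶠ n in atTop, ⨆ i : Fin n, Y i ω / X i ω = ⨆ l, α₂ l / α₁ l := by
    simp only [hXdef, hYdef]
    exact eventually_iSup_fin_eq (fun i => iSup_mul_div_iSup_mul_le hα₂ hα₁ (hZω i)) h₂
  refine ⟨tendsto_const_nhds.congr' (e₁.mono fun _ h => h.symm),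
    tendsto_const_nhds.congr' (e₂.mono fun _ h => h.symm),
    tendsto_const_nhds.congr' ((e₁.and e₂).mono fun n h => ?_)⟩
  dsimp only
  rw [h.1, h.2, add_comm, mul_comm]

/-- Example 2.1: for `Xᵢ = max_l α_{l1} Z_{l,i}`, `Yᵢ = max_l α_{l2} Z_{l,i}` built from
i.i.d. unit Fréchet `Z_{l,i}`, with `c₁ = max_l α_{l1}/α_{l2}`, `c₂ = max_l α_{l2}/α_{l1}`
and `c₁c₂ > 1`, one has `max_{i≤n} Xᵢ/Yᵢ → c₁`, `max_{i≤n} Yᵢ/Xᵢ → c₂` a.s., and hence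
`qₙ → (c₁+c₂-2)/(c₁c₂-1)` almost surely. -/
theorem m4_quotient_correlation_limit {Ω : Type*} [MeasurableSpace Ω] (μ : Measure Ω)
    [IsProbabilityMeasure μ] (L : ℕ) (hL : 0 < L) (Z : ℕ → Fin L → Ω → ℝ)
    (hZ : ∀ i l, Measurable (Z i l))
    (hindep : iIndepFun (fun p : ℕ × Fin L => Z p.1 p.2) μ)
    (hZpos : ∀ i l, ∀ᵐ ω ∂μ, 0 < Z i l ω)
    (hZF : ∀ i l, ∀ x : ℝ, 0 < x →
      μ {ω | Z i l ω ≤ x} = ENNReal.ofReal (exp (-1 / x)))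
    (α₁ α₂ : Fin L → ℝ) (hα₁ : ∀ l, 0 < α₁ l) (hα₂ : ∀ l, 0 < α₂ l)
    (hsum₁ : ∑ l, α₁ l = 1) (hsum₂ : ∑ l, α₂ l = 1)
    (X Y : ℕ → Ω → ℝ)
    (hXdef : ∀ i ω, X i ω = ⨆ l, α₁ l * Z i l ω)
    (hYdef : ∀ i ω, Y i ω = ⨆ l, α₂ l * Z i l ω)
    (c₁ c₂ : ℝ) (hc₁ : c₁ = ⨆ l, α₁ l / α₂ l) (hc₂ : c₂ = ⨆ l, α₂ l / α₁ l)
    (hcc : 1 < c₁ * c₂) :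
    ∀ᵐ ω ∂μ,
      Tendsto (fun n : ℕ => ⨆ i : Fin n, X i ω / Y i ω) atTop (nhds c₁) ∧
      Tendsto (fun n : ℕ => ⨆ i : Fin n, Y i ω / X i ω) atTop (nhds c₂) ∧
      Tendsto (fun n : ℕ =>
          ((⨆ i : Fin n, Y i ω / X i ω) + (⨆ i : Fin n, X i ω / Y i ω) - 2) /
          ((⨆ i : Fin n, Y i ω / X i ω) * (⨆ i : Fin n, X i ω / Y i ω) - 1))
        atTop (nhds ((c₁ + c₂ - 2) / (c₁ * c₂ - 1))) :=
  m4_quotient_correlation_limit_general μ L hL Z hZ hindep hZpos hZF α₁ α₂ hα₁ hα₂ X Y hXdef hYdef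
    c₁ c₂ hc₁ hc₂
end

section
/- Suppose X and Y are unit Fréchet random variables such that P(X/Y < z) = 1 for some finite z > 1. Then liminf_{u→∞} P(X > u | Y > u) ≥ 1/z > 0; in particular X and Y are not tail independent (the tail dependence index λ, if it exists, is at least 1/z). -/
open MeasureTheory Real Filter Topology

/-! Since `X < z Y` with `Y > 0` almost surely, the event `{X > z u}` is almost contained in
`{X > u, Y > u}` for `u > 0`, so `P(X > u | Y > u) ≥ P(X > z u) / P(Y > u)`. For the unit
Fréchet law `P(X > v) = 1 - exp (-1 / v) ∼ 1 / v` as `v → ∞`, so the right-hand side tends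
to `1 / z`. -/

theorem le_liminf_of_tendsto_of_eventually_le {α β : Type*} [ConditionallyCompleteLinearOrder β]
    [TopologicalSpace β] [OrderTopology β] {l : Filter α} [l.NeBot] {f g : α → β} {a : β}
    (hf : Tendsto f l (𝓝 a)) (hfg : f ≤ᶠ[l] g) (hg : l.IsCoboundedUnder (· ≥ ·) g) :
    a ≤ liminf g l :=
  hf.liminf_eq ▸ liminf_le_liminf hfg hf.isBoundedUnder_ge hg

theorem tendsto_one_sub_exp_neg_inv_mul_self :
    Tendsto (fun u : ℝ => (1 - exp (-1 / u)) * u) atTop (𝓝 1) := by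
  have hderiv : HasDerivAt (fun t : ℝ => -exp (-t)) 1 0 := by
    simpa using (hasDerivAt_neg 0).exp.fun_neg
  refine (hderiv.tendsto_slope_zero_right.comp tendsto_inv_atTop_nhdsGT_zero).congr' ?_
  filter_upwards with u
  simp [neg_div]
  ring

theorem tendsto_one_sub_exp_neg_inv_div {z : ℝ} (hz : 0 < z) :
    Tendsto (fun u : ℝ => (1 - exp (-1 / (z * u))) / (1 - exp (-1 / u))) atTop (𝓝 (1 / z)) := by
  have h := tendsto_one_sub_exp_neg_inv_mul_self
  have hquot := (h.comp (tendsto_id.const_mul_atTop hz)).div (h.const_mul z) (by positivity)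
  rw [mul_one] at hquot
  refine hquot.congr' ?_
  filter_upwards [eventually_gt_atTop 0] with u hu
  have hden : 0 < 1 - exp (-1 / u) := by
    simpa using exp_lt_one_iff.mpr (by simpa [neg_div] using hu)
  simp only [Pi.div_apply, Function.comp_apply, id]
  field_simp

section

variable {Ω : Type*} [MeasurableSpace Ω] {μ : Measure Ω}

theorem measureReal_gt_eq_one_sub_exp_neg_inv [IsProbabilityMeasure μ] {W : Ω → ℝ}
    (hW : Measurable W) {x : ℝ} (hWF : μ {ω | W ω ≤ x} = ENNReal.ofReal (exp (-1 / x))) :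
    μ.real {ω | x < W ω} = 1 - exp (-1 / x) := by
  have hcompl : {ω | x < W ω} = {ω | W ω ≤ x}ᶜ := by
    ext ω
    simp
  have hmeas : MeasurableSet {ω | W ω ≤ x} := hW measurableSet_Iic
  rw [hcompl, probReal_compl_eq_one_sub hmeas, measureReal_def, hWF,
    ENNReal.toReal_ofReal (exp_nonneg _)]

theorem measure_gt_mul_le_measure_gt_and_gt {X Y : Ω → ℝ} {z u : ℝ} (hz : 1 ≤ z) (hu : 0 ≤ u)
    (hXY : ∀ᵐ ω ∂μ, X ω / Y ω < z) (hY : ∀ᵐ ω ∂μ, 0 < Y ω) :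
    μ {ω | z * u < X ω} ≤ μ {ω | u < X ω ∧ u < Y ω} := by
  refine measure_mono_ae ?_
  filter_upwards [hXY, hY] with ω hratio hpos (hXω : z * u < X ω)
  have hXlt : X ω < z * Y ω := (div_lt_iff₀ hpos).mp hratio
  constructor <;> nlinarith

end

theorem bounded_ratio_not_tail_independent_general {Ω : Type*} [MeasurableSpace Ω]
    (μ : Measure Ω) [IsProbabilityMeasure μ] (X Y : Ω → ℝ)
    (hX : Measurable X) (hY : Measurable Y)
    (hYpos : ∀ᵐ ω ∂μ, 0 < Y ω)
    (hXF : ∀ x : ℝ, 0 < x → μ {ω | X ω ≤ x} = ENNReal.ofReal (exp (-1 / x)))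
    (hYF : ∀ x : ℝ, 0 < x → μ {ω | Y ω ≤ x} = ENNReal.ofReal (exp (-1 / x)))
    (z : ℝ) (hz : 1 < z) (hbound : μ {ω | X ω / Y ω < z} = 1) :
    1 / z ≤ liminf (fun u : ℝ =>
        (μ {ω | u < X ω ∧ u < Y ω}).toReal / (μ {ω | u < Y ω}).toReal) atTop ∧
    0 < 1 / z := by
  have hz0 : 0 < z := one_pos.trans hz
  have hmeas : MeasurableSet {ω | X ω / Y ω < z} := hX.div hY measurableSet_Iio
  have hratio : ∀ᵐ ω ∂μ, X ω / Y ω < z :=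
    (ae_iff_measure_eq hmeas.nullMeasurableSet).mpr (by rw [hbound, measure_univ])
  have hcond_le_one : ∀ u : ℝ,
      (μ {ω | u < X ω ∧ u < Y ω}).toReal / (μ {ω | u < Y ω}).toReal ≤ 1 := fun u =>
    div_le_one_of_le₀ (measureReal_mono fun ω h => h.2) measureReal_nonneg
  refine ⟨le_liminf_of_tendsto_of_eventually_le (tendsto_one_sub_exp_neg_inv_div hz0) ?_
    (isBoundedUnder_of ⟨1, hcond_le_one⟩).isCoboundedUnder_ge, by positivity⟩
  filter_upwards [eventually_gt_atTop 0] with u hu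
  rw [← measureReal_gt_eq_one_sub_exp_neg_inv hX (hXF _ (by positivity)),
    ← measureReal_gt_eq_one_sub_exp_neg_inv hY (hYF u hu)]
  exact div_le_div_of_nonneg_right (ENNReal.toReal_mono (measure_ne_top _ _)
    (measure_gt_mul_le_measure_gt_and_gt hz.le hu.le hratio hYpos)) measureReal_nonneg

/-- If `X` and `Y` are unit Fréchet random variables with `P(X/Y < z) = 1` for some
finite `z > 1`, then `liminf_{u→∞} P(X > u | Y > u) ≥ 1/z > 0`; in particular `X` and
`Y` are not tail independent. -/
theorem bounded_ratio_not_tail_independent {Ω : Type*} [MeasurableSpace Ω]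
    (μ : Measure Ω) [IsProbabilityMeasure μ] (X Y : Ω → ℝ)
    (hX : Measurable X) (hY : Measurable Y)
    (hXpos : ∀ᵐ ω ∂μ, 0 < X ω) (hYpos : ∀ᵐ ω ∂μ, 0 < Y ω)
    (hXF : ∀ x : ℝ, 0 < x → μ {ω | X ω ≤ x} = ENNReal.ofReal (exp (-1 / x)))
    (hYF : ∀ x : ℝ, 0 < x → μ {ω | Y ω ≤ x} = ENNReal.ofReal (exp (-1 / x)))
    (z : ℝ) (hz : 1 < z) (hbound : μ {ω | X ω / Y ω < z} = 1) :
    1 / z ≤ liminf (fun u : ℝ =>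
        (μ {ω | u < X ω ∧ u < Y ω}).toReal / (μ {ω | u < Y ω}).toReal) atTop ∧
    0 < 1 / z :=
  bounded_ratio_not_tail_independent_general μ X Y hX hY hYpos hXF hYF z hz hbound
end

section
/- Let Z₁, Z₂ be independent unit Fréchet variables, u > 0 a threshold, W = (Z₁-u)·1{Z₁>u}, V = (Z₂-u)·1{Z₂>u}. Then P((u+W)/(u+V) ≤ t) = t/(1+t) - (t/(1+t))e^{-(1+t)/u} for 0 < t < 1, and P((u+W)/(u+V) ≤ t) = t/(1+t) + (1/(1+t))e^{-(1+t)/(tu)} for t ≥ 1. -/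
open MeasureTheory ProbabilityTheory Real Set Filter Topology

lemma frechet_hasDerivAt (c : ℝ) {z : ℝ} (hz : z ≠ 0) :
    HasDerivAt (fun z => Real.exp (-c/z)) (Real.exp (-c/z) * (c / z^2)) z := by
  have h1 : HasDerivAt (fun z : ℝ => -c/z) (c/z^2) z := by
    have := (hasDerivAt_inv hz).const_mul (-c)
    have h2 : -c * -(z ^ 2)⁻¹ = c / z ^ 2 := by field_simp
    simpa [div_eq_mul_inv, h2] using this
  exact (Real.hasDerivAt_exp (-c/z)).comp z h1

lemma frechet_ftc {a b c : ℝ} (hc : 0 < c) (ha : 0 < a) (hab : a ≤ b) :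
    ∫ z in Set.Ioc a b, Real.exp (-c/z) / z^2 =
      (Real.exp (-c/b) - Real.exp (-c/a)) / c := by
  have hcont : ContinuousOn (fun z : ℝ => Real.exp (-c/z) * (c / z^2)) (Set.uIcc a b) := by
    apply ContinuousOn.mul
    · exact (Real.continuous_exp.comp_continuousOn
        (continuousOn_const.div continuousOn_id (fun x hx => by
          rw [Set.uIcc_of_le hab] at hx
          exact ne_of_gt (lt_of_lt_of_le ha hx.1))))
    · exact continuousOn_const.div (continuousOn_pow 2) (fun x hx => by
        rw [Set.uIcc_of_le hab] at hx
        exact pow_ne_zero 2 (ne_of_gt (lt_of_lt_of_le ha hx.1)))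
  have hftc : ∫ z in a..b, Real.exp (-c/z) * (c / z^2) =
      Real.exp (-c/b) - Real.exp (-c/a) := by
    apply intervalIntegral.integral_eq_sub_of_hasDerivAt
    · intro x hx
      rw [Set.uIcc_of_le hab] at hx
      exact frechet_hasDerivAt c (ne_of_gt (lt_of_lt_of_le ha hx.1))
    · exact hcont.intervalIntegrable
  have : ∫ z in a..b, Real.exp (-c/z) / z^2
      = (Real.exp (-c/b) - Real.exp (-c/a)) / c := by
    rw [eq_div_iff (ne_of_gt hc), ← hftc, ← intervalIntegral.integral_mul_const]
    congr 1; funext z; ring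
  rw [← intervalIntegral.integral_of_le hab, this]

lemma frechet_lint_Ioc {a b c : ℝ} (hc : 0 < c) (ha : 0 < a) (hab : a ≤ b) :
    ∫⁻ z in Set.Ioc a b, ENNReal.ofReal (Real.exp (-c/z) / z^2) =
      ENNReal.ofReal ((Real.exp (-c/b) - Real.exp (-c/a)) / c) := by
  rw [← frechet_ftc hc ha hab]
  rw [← ofReal_integral_eq_lintegral_ofReal]
  · have hcont : ContinuousOn (fun z : ℝ => Real.exp (-c/z) / z^2) (Set.Icc a b) := by
      apply ContinuousOn.div
      · exact (Real.continuous_exp.comp_continuousOn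
          (continuousOn_const.div continuousOn_id (fun x hx =>
            ne_of_gt (lt_of_lt_of_le ha hx.1))))
      · exact continuousOn_pow 2
      · exact fun x hx => pow_ne_zero 2 (ne_of_gt (lt_of_lt_of_le ha hx.1))
    exact (hcont.integrableOn_Icc).mono_set Set.Ioc_subset_Icc_self
  · exact ae_of_all _ (fun z => div_nonneg (Real.exp_nonneg _) (sq_nonneg z))

lemma frechet_meas (c : ℝ) :
    Measurable (fun z : ℝ => ENNReal.ofReal (Real.exp (-c/z) / z^2)) := by
  apply ENNReal.measurable_ofReal.comp
  exact (Real.measurable_exp.comp (measurable_const.div measurable_id)).div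
    ((measurable_id.pow_const 2))

lemma frechet_lint_Ioi {a c : ℝ} (hc : 0 < c) (ha : 0 < a) :
    ∫⁻ z in Set.Ioi a, ENNReal.ofReal (Real.exp (-c/z) / z^2) =
      ENNReal.ofReal ((1 - Real.exp (-c/a)) / c) := by
  set W := volume.withDensity (fun z : ℝ => ENNReal.ofReal (Real.exp (-c/z) / z^2)) with hW
  have happ : ∀ s : Set ℝ, MeasurableSet s →
      W s = ∫⁻ z in s, ENNReal.ofReal (Real.exp (-c/z) / z^2) := by
    intro s hs; rw [hW, withDensity_apply _ hs]
  have hmono : Monotone (fun n : ℕ => Set.Ioc a (a + n)) := by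
    intro m n hmn
    exact Set.Ioc_subset_Ioc le_rfl (by simp [Nat.cast_le.mpr hmn])
  have hunion : (⋃ n : ℕ, Set.Ioc a (a + n)) = Set.Ioi a := by
    ext x
    simp only [Set.mem_iUnion, Set.mem_Ioc, Set.mem_Ioi]
    constructor
    · rintro ⟨n, hn, _⟩; exact hn
    · intro hx
      obtain ⟨n, hn⟩ := exists_nat_ge (x - a)
      exact ⟨n, hx, by linarith⟩
  have htend := tendsto_measure_iUnion_atTop (μ := W) hmono
  rw [hunion] at htend
  have heval : ∀ n : ℕ, W (Set.Ioc a (a + n)) =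
      ENNReal.ofReal ((Real.exp (-c/(a + n)) - Real.exp (-c/a)) / c) := by
    intro n
    rw [happ _ measurableSet_Ioc, frechet_lint_Ioc hc ha (le_add_of_nonneg_right n.cast_nonneg)]
  have htend2 : Tendsto (fun n : ℕ => W (Set.Ioc a (a + n))) atTop
      (𝓝 (ENNReal.ofReal ((1 - Real.exp (-c/a)) / c))) := by
    simp only [heval]
    apply (ENNReal.continuous_ofReal.tendsto _).comp
    apply Tendsto.div_const
    apply Tendsto.sub_const
    have h1 : Tendsto (fun n : ℕ => -c/(a + n)) atTop (𝓝 0) := by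
      apply Tendsto.div_atTop tendsto_const_nhds
      exact tendsto_atTop_add_const_left _ _ tendsto_natCast_atTop_atTop
    simpa [Function.comp_def] using (Real.continuous_exp.tendsto 0).comp h1
  rw [← happ _ measurableSet_Ioi]
  exact tendsto_nhds_unique htend htend2

lemma frechet_lint_Ioc_zero {b c : ℝ} (hc : 0 < c) (hb : 0 < b) :
    ∫⁻ z in Set.Ioc 0 b, ENNReal.ofReal (Real.exp (-c/z) / z^2) =
      ENNReal.ofReal (Real.exp (-c/b) / c) := by
  set W := volume.withDensity (fun z : ℝ => ENNReal.ofReal (Real.exp (-c/z) / z^2)) with hW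
  have happ : ∀ s : Set ℝ, MeasurableSet s →
      W s = ∫⁻ z in s, ENNReal.ofReal (Real.exp (-c/z) / z^2) := by
    intro s hs; rw [hW, withDensity_apply _ hs]
  have hpos : ∀ n : ℕ, 0 < b / (n + 1) := by
    intro n; positivity
  have hmono : Monotone (fun n : ℕ => Set.Ioc (b / (n + 1)) b) := by
    intro m n hmn
    apply Set.Ioc_subset_Ioc _ le_rfl
    have hcast : (m:ℝ) ≤ n := Nat.cast_le.mpr hmn
    gcongr <;> linarith
  have hunion : (⋃ n : ℕ, Set.Ioc (b / (n + 1)) b) = Set.Ioc 0 b := by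
    ext x
    simp only [Set.mem_iUnion, Set.mem_Ioc]
    constructor
    · rintro ⟨n, hn, hn2⟩; exact ⟨lt_trans (hpos n) hn, hn2⟩
    · rintro ⟨hx0, hxb⟩
      obtain ⟨n, hn⟩ := exists_nat_gt (b / x)
      refine ⟨n, ?_, hxb⟩
      rw [div_lt_iff₀ (by positivity)]
      have hb2 : b < n * x := (div_lt_iff₀ hx0).mp hn
      nlinarith [hx0.le]
  have htend := tendsto_measure_iUnion_atTop (μ := W) hmono
  rw [hunion] at htend
  have hble : ∀ n : ℕ, b / (n+1) ≤ b := by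
    intro n
    rw [div_le_iff₀ (by positivity)]
    nlinarith [hb.le]
  have heval : ∀ n : ℕ, W (Set.Ioc (b / (n+1)) b) =
      ENNReal.ofReal ((Real.exp (-c/b) - Real.exp (-c/(b/(n+1)))) / c) := by
    intro n
    rw [happ _ measurableSet_Ioc, frechet_lint_Ioc hc (hpos n) (hble n)]
  have htend2 : Tendsto (fun n : ℕ => W (Set.Ioc (b / (n+1)) b)) atTop
      (𝓝 (ENNReal.ofReal (Real.exp (-c/b) / c))) := by
    simp only [heval]
    have : Tendsto (fun n : ℕ => (Real.exp (-c/b) - Real.exp (-c/(b/(n+1)))) / c) atTop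
        (𝓝 ((Real.exp (-c/b) - 0) / c)) := by
      apply Tendsto.div_const
      apply Tendsto.const_sub
      have h1 : Tendsto (fun n : ℕ => -c/(b/(n+1))) atTop atBot := by
        have heq : ∀ n : ℕ, -c/(b/(n+1)) = (-(c/b)) * (n+1) := by
          intro n; field_simp
        simp only [heq]
        apply Tendsto.const_mul_atTop_of_neg
        · simp [div_pos hc hb]
        · exact tendsto_atTop_add_const_right _ _ tendsto_natCast_atTop_atTop
      exact Real.tendsto_exp_atBot.comp h1
    have h2 := (ENNReal.continuous_ofReal.tendsto _).comp this
    simpa [Function.comp_def] using h2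
  rw [← happ _ measurableSet_Ioc]
  exact tendsto_nhds_unique htend htend2

noncomputable def frechetD : ℝ → ENNReal :=
  fun z => if 0 < z then ENNReal.ofReal (Real.exp (-1/z) / z^2) else 0

lemma frechetD_meas : Measurable frechetD :=
  Measurable.ite (measurableSet_lt measurable_const measurable_id) (frechet_meas 1)
    measurable_const

noncomputable def mF : Measure ℝ := (volume : Measure ℝ).withDensity frechetD

lemma mF_null {s : Set ℝ} (hs : volume s = 0) : mF s = 0 :=
  withDensity_absolutelyContinuous volume frechetD hs

lemma mF_Iic_nonpos {x : ℝ} (hx : x ≤ 0) : mF (Set.Iic x) = 0 := by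
  rw [mF, withDensity_apply _ measurableSet_Iic]
  rw [setLIntegral_congr_fun measurableSet_Iic
    (fun z (hz : z ∈ Set.Iic x) => ?_), lintegral_zero]
  show frechetD z = (fun _ => (0:ENNReal)) z
  simp only [frechetD, if_neg (by simp at hz ⊢; linarith : ¬ 0 < z)]

lemma mF_Iic {x : ℝ} (hx : 0 < x) : mF (Set.Iic x) = ENNReal.ofReal (Real.exp (-1/x)) := by
  have hsplit : Set.Iic x = Set.Iic 0 ∪ Set.Ioc 0 x := (Set.Iic_union_Ioc_eq_Iic hx.le).symm
  rw [hsplit, measure_union (Set.Iic_disjoint_Ioc le_rfl) measurableSet_Ioc,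
    mF_Iic_nonpos le_rfl, zero_add]
  rw [mF, withDensity_apply _ measurableSet_Ioc]
  rw [setLIntegral_congr_fun measurableSet_Ioc
    (fun z (hz : z ∈ Set.Ioc 0 x) => ?_)]
  · rw [frechet_lint_Ioc_zero one_pos hx, div_one]
  · show frechetD z = ENNReal.ofReal (Real.exp (-1/z) / z^2)
    simp only [frechetD, if_pos hz.1]

/-- Equation (5.4): for independent unit Fréchet `Z₁, Z₂` and threshold `u > 0`, with
`u+W = max(Z₁,u)`, `u+V = max(Z₂,u)`, the CDF of the ratio `max(Z₁,u)/max(Z₂,u)` is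
`t/(1+t) - (t/(1+t))e^{-(1+t)/u}` for `0 < t < 1` and
`t/(1+t) + (1/(1+t))e^{-(1+t)/(tu)}` for `t ≥ 1`. -/
theorem thresholded_frechet_ratio_cdf {Ω : Type*} [MeasurableSpace Ω] (μ : Measure Ω)
    [IsProbabilityMeasure μ] (Z₁ Z₂ : Ω → ℝ) (h1 : Measurable Z₁) (h2 : Measurable Z₂)
    (hindep : IndepFun Z₁ Z₂ μ)
    (h1pos : ∀ᵐ ω ∂μ, 0 < Z₁ ω) (h2pos : ∀ᵐ ω ∂μ, 0 < Z₂ ω)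
    (h1F : ∀ x : ℝ, 0 < x → μ {ω | Z₁ ω ≤ x} = ENNReal.ofReal (exp (-1 / x)))
    (h2F : ∀ x : ℝ, 0 < x → μ {ω | Z₂ ω ≤ x} = ENNReal.ofReal (exp (-1 / x)))
    (u : ℝ) (hu : 0 < u) :
    (∀ t : ℝ, 0 < t → t < 1 →
      μ {ω | max (Z₁ ω) u / max (Z₂ ω) u ≤ t}
        = ENNReal.ofReal (t / (1 + t) - (t / (1 + t)) * exp (-(1 + t) / u))) ∧
    (∀ t : ℝ, 1 ≤ t →
      μ {ω | max (Z₁ ω) u / max (Z₂ ω) u ≤ t}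
        = ENNReal.ofReal (t / (1 + t) + (1 / (1 + t)) * exp (-(1 + t) / (t * u)))) := by
  classical
  -- identification of the laws
  have hmap : ∀ (Z : Ω → ℝ), Measurable Z → (∀ᵐ ω ∂μ, 0 < Z ω) →
      (∀ x : ℝ, 0 < x → μ {ω | Z ω ≤ x} = ENNReal.ofReal (exp (-1 / x))) →
      μ.map Z = mF := by
    intro Z hZ hZpos hZF
    haveI := Measure.isProbabilityMeasure_map (μ := μ) hZ.aemeasurable
    refine Measure.ext_of_Iic (μ.map Z) mF (fun a => ?_)
    rw [Measure.map_apply hZ measurableSet_Iic]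
    by_cases ha : 0 < a
    · rw [show Z ⁻¹' Set.Iic a = {ω | Z ω ≤ a} from rfl, hZF a ha, mF_Iic ha]
    · push_neg at ha
      rw [mF_Iic_nonpos ha, ae_iff] at *
      apply measure_mono_null _ hZpos
      intro ω hω
      simp only [Set.mem_preimage, Set.mem_Iic] at hω
      simp only [Set.mem_setOf_eq, not_lt]
      linarith
  have hmap1 : μ.map Z₁ = mF := hmap Z₁ h1 h1pos h1F
  have hmap2 : μ.map Z₂ = mF := hmap Z₂ h2 h2pos h2F
  haveI : IsProbabilityMeasure mF := by
    rw [← hmap1]; exact Measure.isProbabilityMeasure_map h1.aemeasurable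
  have hjoint : μ.map (fun ω => (Z₁ ω, Z₂ ω)) = mF.prod mF := by
    rw [(indepFun_iff_map_prod_eq_prod_map_map h1.aemeasurable h2.aemeasurable).mp hindep,
      hmap1, hmap2]
  -- key reduction
  have hkey : ∀ t : ℝ, 0 < t →
      μ {ω | max (Z₁ ω) u / max (Z₂ ω) u ≤ t}
        = ∫⁻ y, (if u ≤ t * max y u then ENNReal.ofReal (Real.exp (-1/(t * max y u))) else 0)
            ∂mF := by
    intro t ht
    set S : Set (ℝ × ℝ) := {p | max p.1 u ≤ t * max p.2 u} with hS
    have hSmeas : MeasurableSet S :=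
      measurableSet_le (measurable_fst.max measurable_const)
        (measurable_const.mul (measurable_snd.max measurable_const))
    have hset : {ω | max (Z₁ ω) u / max (Z₂ ω) u ≤ t}
        = (fun ω => (Z₁ ω, Z₂ ω)) ⁻¹' S := by
      ext ω
      have hc : (0:ℝ) < max (Z₂ ω) u := lt_of_lt_of_le hu (le_max_right _ _)
      simp only [Set.mem_setOf_eq, Set.mem_preimage, hS]
      rw [div_le_iff₀ hc, mul_comm]
    rw [hset, ← Measure.map_apply (h1.prodMk h2) hSmeas, hjoint,
      Measure.prod_apply_symm hSmeas]
    refine lintegral_congr (fun y => ?_)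
    by_cases hcy : u ≤ t * max y u
    · have hslice : ((fun x => (x, y)) ⁻¹' S) = Set.Iic (t * max y u) := by
        ext x
        simp only [Set.mem_preimage, hS, Set.mem_setOf_eq, Set.mem_Iic, max_le_iff]
        exact ⟨fun h => h.1, fun h => ⟨h, hcy⟩⟩
      rw [hslice, if_pos hcy, mF_Iic (lt_of_lt_of_le hu hcy)]
    · have hslice : ((fun x => (x, y)) ⁻¹' S) = ∅ := by
        ext x
        simp only [Set.mem_preimage, hS, Set.mem_setOf_eq, Set.mem_empty_iff_false,
          iff_false, max_le_iff, not_and]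
        exact fun _ => hcy
      rw [hslice, if_neg hcy, measure_empty]
  constructor
  · -- case 0 < t < 1
    intro t ht ht1
    have ht1' : (0:ℝ) < 1 + t := by linarith
    rw [hkey t ht]
    have hut : u < u / t := by
      rw [lt_div_iff₀ ht]; nlinarith
    have hcond : ∀ y : ℝ, (u ≤ t * max y u) ↔ u / t ≤ y := by
      intro y
      rw [← div_le_iff₀' ht, le_max_iff]
      constructor
      · rintro (h | h)
        · exact h
        · linarith
      · exact fun h => Or.inl h
    have hg2 : Measurable (fun y : ℝ => ENNReal.ofReal (Real.exp (-1/(t * y)))) := by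
      apply ENNReal.measurable_ofReal.comp
      exact Real.measurable_exp.comp (measurable_const.div (measurable_const.mul measurable_id))
    have hif : (∫⁻ y, (if u ≤ t * max y u then ENNReal.ofReal (Real.exp (-1/(t * max y u)))
          else 0) ∂mF)
        = ∫⁻ y, (if u / t ≤ y then ENNReal.ofReal (Real.exp (-1/(t * y))) else 0) ∂mF := by
      refine lintegral_congr (fun y => ?_)
      by_cases hy : u / t ≤ y
      · rw [if_pos ((hcond y).mpr hy), if_pos hy, max_eq_left (le_trans hut.le hy)]
      · rw [if_neg (fun h => hy ((hcond y).mp h)), if_neg hy]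
    rw [hif, ← lintegral_add_compl
      (fun y : ℝ => if u / t ≤ y then ENNReal.ofReal (Real.exp (-1/(t * y))) else 0)
      (measurableSet_Ici (a := u/t)), Set.compl_Ici]
    have hIio : ∫⁻ y in Set.Iio (u/t),
        (if u / t ≤ y then ENNReal.ofReal (Real.exp (-1/(t * y))) else 0) ∂mF = 0 := by
      have hz : ∀ y ∈ Set.Iio (u/t),
          (if u / t ≤ y then ENNReal.ofReal (Real.exp (-1/(t * y))) else 0) = (0:ENNReal) :=
        fun y hy => if_neg (not_le.mpr hy)
      rw [setLIntegral_congr_fun measurableSet_Iio hz, lintegral_zero]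
    have hAe : (Set.Ici (u/t) : Set ℝ) =ᵐ[mF] Set.Ioi (u/t) := by
      apply MeasureTheory.ae_eq_set.mpr
      constructor
      · rw [Set.Ici_sdiff_Ioi, Set.Icc_self]
        exact mF_null volume_singleton
      · rw [Set.diff_eq_empty.mpr Set.Ioi_subset_Ici_self, measure_empty]
    have hIci : ∫⁻ y in Set.Ici (u/t),
        (if u / t ≤ y then ENNReal.ofReal (Real.exp (-1/(t * y))) else 0) ∂mF
        = ENNReal.ofReal (t/(1+t) - (t/(1+t)) * Real.exp (-(1+t)/u)) := by
      rw [setLIntegral_congr hAe]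
      have hc2 : ∫⁻ y in Set.Ioi (u/t),
          (if u / t ≤ y then ENNReal.ofReal (Real.exp (-1/(t * y))) else 0) ∂mF
          = ∫⁻ y in Set.Ioi (u/t), ENNReal.ofReal (Real.exp (-1/(t * y))) ∂mF := by
        apply setLIntegral_congr_fun measurableSet_Ioi
        exact (fun y (hy : y ∈ Set.Ioi (u/t)) => if_pos (le_of_lt hy))
      rw [hc2, show mF.restrict (Set.Ioi (u/t))
          = ((volume : Measure ℝ).restrict (Set.Ioi (u/t))).withDensity frechetD from
          restrict_withDensity measurableSet_Ioi _,
        lintegral_withDensity_eq_lintegral_mul _ frechetD_meas hg2]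
      rw [setLIntegral_congr_fun measurableSet_Ioi
        (fun y (hy : y ∈ Set.Ioi (u/t)) => ?_)]
      · rw [frechet_lint_Ioi (c := (1+t)/t) (a := u/t) (by positivity) (by positivity)]
        congr 1
        have hE : Real.exp (-((1+t)/t)/(u/t)) = Real.exp (-(1+t)/u) := by
          congr 1; field_simp
        rw [hE]
        field_simp
      · have hy' : u / t < y := hy
        have hy0 : (0:ℝ) < y := lt_trans (by positivity) hy'
        show frechetD y * ENNReal.ofReal (Real.exp (-1/(t * y)))
          = ENNReal.ofReal (Real.exp (-((1+t)/t)/y) / y^2)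
        simp only [frechetD, if_pos hy0]
        rw [← ENNReal.ofReal_mul (by positivity)]
        congr 1
        rw [div_mul_eq_mul_div, ← Real.exp_add]
        congr 2
        field_simp
        ring
    rw [hIio, hIci, add_zero]
  · -- case t ≥ 1
    intro t ht
    have ht0 : (0:ℝ) < t := lt_of_lt_of_le one_pos ht
    have ht1 : (0:ℝ) < 1 + t := by linarith
    rw [hkey t ht0]
    have hcond : ∀ y : ℝ, u ≤ t * max y u := by
      intro y
      calc u = 1 * u := (one_mul u).symm
        _ ≤ t * max y u := by
            apply mul_le_mul ht (le_max_right _ _) hu.le ht0.le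
    have hg : Measurable (fun y : ℝ => ENNReal.ofReal (Real.exp (-1/(t * max y u)))) := by
      apply ENNReal.measurable_ofReal.comp
      exact Real.measurable_exp.comp
        (measurable_const.div (measurable_const.mul (measurable_id.max measurable_const)))
    rw [lintegral_congr (g := fun y : ℝ => ENNReal.ofReal (Real.exp (-1/(t * max y u))))
      (fun y => if_pos (hcond y))]
    rw [← lintegral_add_compl (μ := mF)
      (fun y : ℝ => ENNReal.ofReal (Real.exp (-1/(t * max y u)))) (measurableSet_Iic (a := u)),
      Set.compl_Iic]
    have hIic : ∫⁻ y in Set.Iic u, ENNReal.ofReal (Real.exp (-1/(t * max y u))) ∂mF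
        = ENNReal.ofReal (Real.exp (-(1+t)/(t*u))) := by
      have hc1 : ∫⁻ y in Set.Iic u, ENNReal.ofReal (Real.exp (-1/(t * max y u))) ∂mF
          = ∫⁻ _ in Set.Iic u, ENNReal.ofReal (Real.exp (-1/(t*u))) ∂mF := by
        apply setLIntegral_congr_fun measurableSet_Iic
        refine (fun y (hy : y ∈ Set.Iic u) => ?_)
        simp only [max_eq_right (Set.mem_Iic.mp hy)]
      rw [hc1, setLIntegral_const, mF_Iic hu, ← ENNReal.ofReal_mul (Real.exp_nonneg _),
        ← Real.exp_add]
      congr 2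
      field_simp
      ring
    have hIoi : ∫⁻ y in Set.Ioi u, ENNReal.ofReal (Real.exp (-1/(t * max y u))) ∂mF
        = ENNReal.ofReal ((1 - Real.exp (-((1+t)/t)/u)) / ((1+t)/t)) := by
      rw [show mF.restrict (Set.Ioi u)
          = ((volume : Measure ℝ).restrict (Set.Ioi u)).withDensity frechetD from
          restrict_withDensity measurableSet_Ioi _,
        lintegral_withDensity_eq_lintegral_mul _ frechetD_meas hg]
      rw [setLIntegral_congr_fun measurableSet_Ioi
        (fun y (hy : y ∈ Set.Ioi u) => ?_)]
      · exact frechet_lint_Ioi (by positivity) hu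
      · have hy' : u < y := hy
        have hy0 : 0 < y := lt_trans hu hy'
        show frechetD y * ENNReal.ofReal (Real.exp (-1/(t * max y u)))
          = ENNReal.ofReal (Real.exp (-((1+t)/t)/y) / y^2)
        rw [max_eq_left hy'.le]
        simp only [frechetD, if_pos hy0]
        rw [← ENNReal.ofReal_mul (by positivity)]
        congr 1
        rw [div_mul_eq_mul_div, ← Real.exp_add]
        congr 2
        field_simp
        ring
    rw [hIic, hIoi, ← ENNReal.ofReal_add (Real.exp_nonneg _)]
    · congr 1
      have hE : Real.exp (-((1+t)/t)/u) = Real.exp (-(1+t)/(t*u)) := by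
        congr 1; field_simp
      rw [hE]
      field_simp
      ring
    · apply div_nonneg _ (by positivity)
      simp only [sub_nonneg]
      apply Real.exp_le_one_iff.mpr  -- maybe exp_le_one
      apply div_nonpos_of_nonpos_of_nonneg
      · simp; positivity
      · exact hu.le
end
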